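/- arXiv:2604.12519 — 6 statements merged into one kernel-verified Lean document; each statement's English description precedes it below -/
import Mathlib

section
/- Let (X, 𝒜) be a measurable space, let P₁ and P₂ be probability measures on X, let L_max > 0, and let L₁, L₂ : X → ℝ be measurable losses with 0 ≤ Lᵢ(x) ≤ L_max for all x and i ∈ {1,2}. Assume that for some C ∈ [0, 2·L_max] one has L₁(x) + L₂(x) ≥ C for all x ∈ X, and that D_H²(P₁‖P₂) ≤ Γ_H for some Γ_H ≥ 0. Then for every α ∈ [0,1), the two-point prior-predictive CVaR satisfies: inf_{t ∈ ℝ} { t + (1/(1−α))·(½∫(L₁−t)₊ dP₁ + ½∫(L₂−t)₊ dP₂) } ≥ inf_{t ∈ ℝ} { t + (L_max/(1−α))·( √(((C/2 − t)/L_max)₊) − √Γ_H )₊² }. -/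
open MeasureTheory

/-- Squared Hellinger divergence, computed with the dominating measure `P + Q`. -/
noncomputable def sqHellinger {X : Type*} [MeasurableSpace X] (P Q : Measure X) : ℝ :=
  1 - ∫ x, Real.sqrt ((P.rnDeriv (P + Q) x).toReal * (Q.rnDeriv (P + Q) x).toReal) ∂(P + Q)


lemma quad_core {a b g m K : ℝ} (hb0 : 0 ≤ b) (hg0 : 0 ≤ g)
    (hm0 : 0 ≤ m) (hm1 : m ≤ 1)
    (h : b * g < a) (hab : a ≤ b)
    (hDsq : (1 - m) ^ 2 ≤ g ^ 2 * (2 - g ^ 2))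
    (hsm : a ^ 2 * m ≤ K) :
    (a - b * g) ^ 2 ≤ K := by
  have hbg0 : 0 ≤ b * g := mul_nonneg hb0 hg0
  have hb_pos : 0 < b := lt_of_lt_of_le (lt_of_le_of_lt hbg0 h) hab
  have hg1 : g < 1 := by
    by_contra hcon
    push_neg at hcon
    nlinarith
  have hD0 : 0 ≤ 1 - m := by linarith
  have hE0 : 0 ≤ g * (2 - g) := by nlinarith
  have hD2E2 : (1 - m) ^ 2 ≤ (g * (2 - g)) ^ 2 := by nlinarith [sq_nonneg (g * (1 - g))]
  have hend : 1 - m ≤ g * (2 - g) := (pow_le_pow_iff_left₀ hD0 hE0 two_ne_zero).1 hD2E2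
  have hpos : 0 < b - b * g := by nlinarith
  have hident : (b - b * g) * ((2 * a * (b * g) - (b * g) ^ 2) - a ^ 2 * (1 - m)) =
      (b - a) * (b ^ 2 * g ^ 2 * m) + (a - b * g) * (b ^ 2 * (g * (2 - g) - (1 - m)))
        + (1 - m) * ((b - b * g) * ((a - b * g) * (b - a))) := by ring
  have hrhs : 0 ≤ (b - a) * (b ^ 2 * g ^ 2 * m) + (a - b * g) * (b ^ 2 * (g * (2 - g) - (1 - m)))
        + (1 - m) * ((b - b * g) * ((a - b * g) * (b - a))) := by
    have h1 : 0 ≤ (b - a) * (b ^ 2 * g ^ 2 * m) :=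
      mul_nonneg (by linarith) (by positivity)
    have h2 : 0 ≤ (a - b * g) * (b ^ 2 * (g * (2 - g) - (1 - m))) :=
      mul_nonneg (by linarith) (mul_nonneg (by positivity) (by linarith))
    have h3 : 0 ≤ (1 - m) * ((b - b * g) * ((a - b * g) * (b - a))) :=
      mul_nonneg hD0 (mul_nonneg hpos.le (mul_nonneg (by linarith) (by linarith)))
    linarith
  have h0 : 0 ≤ (b - b * g) * ((2 * a * (b * g) - (b * g) ^ 2) - a ^ 2 * (1 - m)) := by
    rw [hident]; exact hrhs
  have hkey : a ^ 2 * (1 - m) ≤ 2 * a * (b * g) - (b * g) ^ 2 := by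
    nlinarith [h0, hpos]
  nlinarith [hkey, hsm]

lemma arith_core {s M G m r K : ℝ} (hs0 : 0 ≤ s) (hsM : s ≤ M) (hG : 0 ≤ G)
    (hm0 : 0 ≤ m) (hm1 : m ≤ 1) (hr0 : 0 ≤ r) (hrG : 1 - G ≤ r)
    (hCS : r ^ 2 ≤ m * (2 - m)) (hK0 : 0 ≤ K) (hKm : s * m ≤ K) :
    (max (Real.sqrt s - Real.sqrt (M * G)) 0) ^ 2 ≤ K := by
  rcases le_or_gt (Real.sqrt s) (Real.sqrt (M * G)) with h | h
  · rw [max_eq_right (by linarith)]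
    simpa using hK0
  · rw [max_eq_left (by linarith)]
    have hM0 : 0 ≤ M := le_trans hs0 hsM
    have ha2 : Real.sqrt s ^ 2 = s := Real.sq_sqrt hs0
    have hb2 : Real.sqrt M ^ 2 = M := Real.sq_sqrt hM0
    have hg2 : Real.sqrt G ^ 2 = G := Real.sq_sqrt hG
    have hcbg : Real.sqrt (M * G) = Real.sqrt M * Real.sqrt G := Real.sqrt_mul hM0 G
    have hab : Real.sqrt s ≤ Real.sqrt M := Real.sqrt_le_sqrt hsM
    rw [hcbg] at h ⊢
    -- need G < 1 to get the hDsq hypothesis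
    have hG1 : G < 1 := by
      by_contra hcon
      push_neg at hcon
      have : Real.sqrt M ≤ Real.sqrt M * Real.sqrt G := by
        nlinarith [Real.sqrt_nonneg M, Real.sqrt_nonneg G, Real.sq_sqrt (le_trans zero_le_one hcon),
          Real.one_le_sqrt.2 hcon]
      nlinarith [Real.sqrt_nonneg M, Real.sqrt_nonneg G]
    have hr1G : (1 - G) ^ 2 ≤ r ^ 2 := by nlinarith
    have hDsq : (1 - m) ^ 2 ≤ Real.sqrt G ^ 2 * (2 - Real.sqrt G ^ 2) := by
      rw [hg2]; nlinarith
    exact quad_core (Real.sqrt_nonneg M) (Real.sqrt_nonneg G) hm0 hm1 h hab hDsq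
      (by rw [ha2]; exact hKm)


lemma shift_lemma {u x β : ℝ} (hu : 0 ≤ u) (hx : 0 ≤ x) (hβ : 0 ≤ β) :
    (max (Real.sqrt (u + x) - β) 0) ^ 2 ≤ (max (Real.sqrt u - β) 0) ^ 2 + x := by
  have hA0 : 0 ≤ Real.sqrt (u + x) := Real.sqrt_nonneg _
  have hB0 : 0 ≤ Real.sqrt u := Real.sqrt_nonneg _
  have hX0 : 0 ≤ Real.sqrt x := Real.sqrt_nonneg _
  have hA2 : Real.sqrt (u + x) ^ 2 = u + x := Real.sq_sqrt (by linarith)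
  have hB2 : Real.sqrt u ^ 2 = u := Real.sq_sqrt hu
  have hX2 : Real.sqrt x ^ 2 = x := Real.sq_sqrt hx
  have hAB : Real.sqrt u ≤ Real.sqrt (u + x) := Real.sqrt_le_sqrt (by linarith)
  have htri : Real.sqrt (u + x) ≤ Real.sqrt u + Real.sqrt x := by
    nlinarith [mul_nonneg hB0 hX0]
  rcases le_or_gt (Real.sqrt (u + x)) β with h | h
  · rw [max_eq_right (by linarith)]
    rw [show ((0:ℝ)) ^ 2 = 0 by norm_num]
    positivity
  · rw [max_eq_left (by linarith)]
    rcases le_or_gt (Real.sqrt u) β with h2 | h2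
    · rw [max_eq_right (by linarith)]
      nlinarith
    · rw [max_eq_left (by linarith)]
      nlinarith

lemma hellinger_core {X : Type*} [MeasurableSpace X] (P₁ P₂ : Measure X)
    [IsProbabilityMeasure P₁] [IsProbabilityMeasure P₂]
    {G M s : ℝ} (hG : 0 ≤ G) (hH : sqHellinger P₁ P₂ ≤ G)
    (hs0 : 0 ≤ s) (hsM : s ≤ M)
    {g₁ g₂ : X → ℝ} (hg₁ : Measurable g₁) (hg₂ : Measurable g₂)
    (hg₁0 : ∀ x, 0 ≤ g₁ x) (hg₂0 : ∀ x, 0 ≤ g₂ x)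
    (hg₁M : ∀ x, g₁ x ≤ M) (hg₂M : ∀ x, g₂ x ≤ M)
    (hgsum : ∀ x, 2 * s ≤ g₁ x + g₂ x) :
    (max (Real.sqrt s - Real.sqrt (M * G)) 0) ^ 2 ≤
      (1 / 2) * (∫ x, g₁ x ∂P₁) + (1 / 2) * (∫ x, g₂ x ∂P₂) := by
  set ν : Measure X := P₁ + P₂ with hν
  have hac₁ : P₁ ≪ ν := Measure.absolutelyContinuous_of_le (by rw [hν]; exact Measure.le_add_right le_rfl)
  have hac₂ : P₂ ≪ ν := Measure.absolutelyContinuous_of_le (by rw [hν]; exact Measure.le_add_left le_rfl)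
  set p : X → ENNReal := P₁.rnDeriv ν with hpdef
  set q : X → ENNReal := P₂.rnDeriv ν with hqdef
  have hp : Measurable p := Measure.measurable_rnDeriv _ _
  have hq : Measurable q := Measure.measurable_rnDeriv _ _
  have hp1 : ∫⁻ x, p x ∂ν = 1 := by
    rw [Measure.lintegral_rnDeriv hac₁]; simp
  have hq1 : ∫⁻ x, q x ∂ν = 1 := by
    rw [Measure.lintegral_rnDeriv hac₂]; simp
  set mL : ENNReal := ∫⁻ x, min (p x) (q x) ∂ν with hmLdef
  set oL : ENNReal := ∫⁻ x, max (p x) (q x) ∂ν with hoLdef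
  have hminmeas : Measurable fun x => min (p x) (q x) := hp.min hq
  have hmaxmeas : Measurable fun x => max (p x) (q x) := hp.max hq
  have hmL1 : mL ≤ 1 := by
    rw [hmLdef, ← hp1]
    exact lintegral_mono fun x => min_le_left _ _
  have hoL2 : oL ≤ 2 := by
    rw [hoLdef]
    calc ∫⁻ x, max (p x) (q x) ∂ν ≤ ∫⁻ x, p x + q x ∂ν :=
          lintegral_mono fun x => max_le (le_add_right le_rfl) (le_add_left le_rfl)
      _ = 2 := by rw [lintegral_add_left hp, hp1, hq1]; norm_num
  have hmoL : mL + oL = 2 := by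
    rw [hmLdef, hoLdef, ← lintegral_add_left hminmeas]
    have : ∀ x, min (p x) (q x) + max (p x) (q x) = p x + q x := fun x => min_add_max _ _
    simp_rw [this]
    rw [lintegral_add_left hp, hp1, hq1]
    norm_num
  -- Cauchy-Schwarz step
  set aL : ENNReal := ∫⁻ x, (p x * q x) ^ (1/2 : ℝ) ∂ν with haLdef
  have hfmeas : Measurable fun x => (min (p x) (q x)) ^ (1/2:ℝ) := hminmeas.pow_const _
  have hgmeas : Measurable fun x => (max (p x) (q x)) ^ (1/2:ℝ) := hmaxmeas.pow_const _
  have hCSL : aL ≤ mL ^ (1/2 : ℝ) * oL ^ (1/2 : ℝ) := by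
    have h22 : Real.HolderConjugate 2 2 := Real.HolderConjugate.two_two
    have hCS0 := ENNReal.lintegral_mul_le_Lp_mul_Lq ν h22 hfmeas.aemeasurable hgmeas.aemeasurable
    have heq1 : ∀ x : X, ((fun x => (min (p x) (q x)) ^ (1/2:ℝ)) *
        (fun x => (max (p x) (q x)) ^ (1/2:ℝ))) x = (p x * q x) ^ (1/2:ℝ) := by
      intro x
      simp only [Pi.mul_apply]
      rw [← ENNReal.mul_rpow_of_nonneg _ _ (by norm_num : (0:ℝ) ≤ 1/2), min_mul_max]
    have heq2 : ∀ x : X, ((min (p x) (q x)) ^ (1/2:ℝ)) ^ (2:ℝ) = min (p x) (q x) := by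
      intro x; rw [← ENNReal.rpow_mul]; norm_num
    have heq3 : ∀ x : X, ((max (p x) (q x)) ^ (1/2:ℝ)) ^ (2:ℝ) = max (p x) (q x) := by
      intro x; rw [← ENNReal.rpow_mul]; norm_num
    simp_rw [heq1, heq2, heq3] at hCS0
    rw [haLdef, hmLdef, hoLdef]
    convert hCS0 using 3 <;> norm_num
  have hmLne : mL ≠ ⊤ := ne_top_of_le_ne_top ENNReal.one_ne_top hmL1
  have hoLne : oL ≠ ⊤ := ne_top_of_le_ne_top (by norm_num) hoL2
  have haLne : aL ≠ ⊤ := by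
    refine ne_top_of_le_ne_top (ENNReal.mul_ne_top ?_ ?_) hCSL
    · exact ENNReal.rpow_ne_top_of_nonneg (by norm_num) hmLne
    · exact ENNReal.rpow_ne_top_of_nonneg (by norm_num) hoLne
  have hm0 : (0:ℝ) ≤ mL.toReal := ENNReal.toReal_nonneg
  have ho0 : (0:ℝ) ≤ oL.toReal := ENNReal.toReal_nonneg
  have hm1 : mL.toReal ≤ 1 := by
    have := ENNReal.toReal_mono ENNReal.one_ne_top hmL1
    simpa using this
  have hmo : mL.toReal + oL.toReal = 2 := by
    rw [← ENNReal.toReal_add hmLne hoLne, hmoL]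
    norm_num
  have hrr : aL.toReal ≤ Real.sqrt mL.toReal * Real.sqrt oL.toReal := by
    have h1 := ENNReal.toReal_mono
      (ENNReal.mul_ne_top (ENNReal.rpow_ne_top_of_nonneg (by norm_num) hmLne)
        (ENNReal.rpow_ne_top_of_nonneg (by norm_num) hoLne)) hCSL
    rw [ENNReal.toReal_mul, ← ENNReal.toReal_rpow, ← ENNReal.toReal_rpow] at h1
    rwa [Real.sqrt_eq_rpow, Real.sqrt_eq_rpow]
  have hCSr : aL.toReal ^ 2 ≤ mL.toReal * (2 - mL.toReal) := by
    have h2 : aL.toReal ^ 2 ≤ mL.toReal * oL.toReal := by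
      nlinarith [Real.sq_sqrt hm0, Real.sq_sqrt ho0, Real.sqrt_nonneg mL.toReal,
        Real.sqrt_nonneg oL.toReal, ENNReal.toReal_nonneg (a := aL)]
    have : oL.toReal = 2 - mL.toReal := by linarith
    rwa [this] at h2
  -- Hellinger link
  have hIr : ∫ x, Real.sqrt ((p x).toReal * (q x).toReal) ∂ν = aL.toReal := by
    rw [integral_eq_lintegral_of_nonneg_ae (f := fun x => Real.sqrt ((p x).toReal * (q x).toReal))
      (Filter.Eventually.of_forall fun x => Real.sqrt_nonneg _)
      ((hp.ennreal_toReal.mul hq.ennreal_toReal).sqrt.aestronglyMeasurable)]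
    congr 1
    apply lintegral_congr_ae
    filter_upwards [Measure.rnDeriv_lt_top P₁ ν, Measure.rnDeriv_lt_top P₂ ν] with x hx1 hx2
    rw [Real.sqrt_eq_rpow, ← ENNReal.toReal_mul,
      ← ENNReal.ofReal_rpow_of_nonneg ENNReal.toReal_nonneg (by norm_num : (0:ℝ) ≤ 1/2),
      ENNReal.ofReal_toReal (ENNReal.mul_ne_top hx1.ne hx2.ne)]
  have hrG : 1 - G ≤ aL.toReal := by
    unfold sqHellinger at hH
    rw [← hν, ← hpdef, ← hqdef, hIr] at hH
    linarith
  -- lower bound on the integrals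
  set A₁ : ENNReal := ∫⁻ x, ENNReal.ofReal (g₁ x) ∂P₁ with hA₁def
  set A₂ : ENNReal := ∫⁻ x, ENNReal.ofReal (g₂ x) ∂P₂ with hA₂def
  have hg₁m : Measurable fun x => ENNReal.ofReal (g₁ x) := hg₁.ennreal_ofReal
  have hg₂m : Measurable fun x => ENNReal.ofReal (g₂ x) := hg₂.ennreal_ofReal
  have hA₁le : A₁ ≤ ENNReal.ofReal M := by
    rw [hA₁def]
    calc ∫⁻ x, ENNReal.ofReal (g₁ x) ∂P₁ ≤ ∫⁻ _, ENNReal.ofReal M ∂P₁ :=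
          lintegral_mono fun x => ENNReal.ofReal_le_ofReal (hg₁M x)
      _ = ENNReal.ofReal M := by rw [lintegral_const]; simp
  have hA₂le : A₂ ≤ ENNReal.ofReal M := by
    rw [hA₂def]
    calc ∫⁻ x, ENNReal.ofReal (g₂ x) ∂P₂ ≤ ∫⁻ _, ENNReal.ofReal M ∂P₂ :=
          lintegral_mono fun x => ENNReal.ofReal_le_ofReal (hg₂M x)
      _ = ENNReal.ofReal M := by rw [lintegral_const]; simp
  have hA₁ne : A₁ ≠ ⊤ := ne_top_of_le_ne_top ENNReal.ofReal_ne_top hA₁le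
  have hA₂ne : A₂ ≠ ⊤ := ne_top_of_le_ne_top ENNReal.ofReal_ne_top hA₂le
  have hI₁ : ∫ x, g₁ x ∂P₁ = A₁.toReal :=
    integral_eq_lintegral_of_nonneg_ae (Filter.Eventually.of_forall hg₁0)
      hg₁.aestronglyMeasurable
  have hI₂ : ∫ x, g₂ x ∂P₂ = A₂.toReal :=
    integral_eq_lintegral_of_nonneg_ae (Filter.Eventually.of_forall hg₂0)
      hg₂.aestronglyMeasurable
  have hmain : ENNReal.ofReal (2*s) * mL ≤ A₁ + A₂ := by
    have e1 : A₁ = ∫⁻ x, p x * ENNReal.ofReal (g₁ x) ∂ν :=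
      (lintegral_rnDeriv_mul hac₁ hg₁m.aemeasurable).symm
    have e2 : A₂ = ∫⁻ x, q x * ENNReal.ofReal (g₂ x) ∂ν :=
      (lintegral_rnDeriv_mul hac₂ hg₂m.aemeasurable).symm
    rw [e1, e2, ← lintegral_add_left (f := fun x => p x * ENNReal.ofReal (g₁ x)) (hp.mul hg₁m), hmLdef, ← lintegral_const_mul _ hminmeas]
    refine lintegral_mono fun x => ?_
    calc ENNReal.ofReal (2*s) * min (p x) (q x)
        ≤ ENNReal.ofReal (g₁ x + g₂ x) * min (p x) (q x) :=
          mul_le_mul_of_nonneg_right (ENNReal.ofReal_le_ofReal (hgsum x)) (zero_le)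
      _ = ENNReal.ofReal (g₁ x) * min (p x) (q x) + ENNReal.ofReal (g₂ x) * min (p x) (q x) := by
          rw [ENNReal.ofReal_add (hg₁0 x) (hg₂0 x), add_mul]
      _ ≤ ENNReal.ofReal (g₁ x) * p x + ENNReal.ofReal (g₂ x) * q x :=
          add_le_add (mul_le_mul_of_nonneg_left (min_le_left _ _) (zero_le)) (mul_le_mul_of_nonneg_left (min_le_right _ _) (zero_le))
      _ = p x * ENNReal.ofReal (g₁ x) + q x * ENNReal.ofReal (g₂ x) := by
          rw [mul_comm, mul_comm (ENNReal.ofReal (g₂ x))]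
  have hKmr : s * mL.toReal ≤ (1/2) * (∫ x, g₁ x ∂P₁) + (1/2) * (∫ x, g₂ x ∂P₂) := by
    have h3 := ENNReal.toReal_mono (by finiteness) hmain
    rw [ENNReal.toReal_mul, ENNReal.toReal_ofReal (by linarith), ENNReal.toReal_add hA₁ne hA₂ne]
      at h3
    rw [hI₁, hI₂]
    linarith
  have hK0 : (0:ℝ) ≤ (1/2) * (∫ x, g₁ x ∂P₁) + (1/2) * (∫ x, g₂ x ∂P₂) := by
    have i1 : 0 ≤ ∫ x, g₁ x ∂P₁ := integral_nonneg hg₁0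
    have i2 : 0 ≤ ∫ x, g₂ x ∂P₂ := integral_nonneg hg₂0
    linarith
  exact arith_core hs0 hsM hG hm0 hm1 ENNReal.toReal_nonneg hrG hCSr hK0 hKmr

theorem two_point_hellinger_cvar
    {X : Type*} [MeasurableSpace X]
    (P₁ P₂ : Measure X) [IsProbabilityMeasure P₁] [IsProbabilityMeasure P₂]
    (Lmax : ℝ) (hLmax : 0 < Lmax)
    (L₁ L₂ : X → ℝ) (hL₁ : Measurable L₁) (hL₂ : Measurable L₂)
    (hL₁b : ∀ x, L₁ x ∈ Set.Icc 0 Lmax) (hL₂b : ∀ x, L₂ x ∈ Set.Icc 0 Lmax)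
    (C : ℝ) (hC : C ∈ Set.Icc 0 (2 * Lmax))
    (hsum : ∀ x, C ≤ L₁ x + L₂ x)
    (ΓH : ℝ) (hΓ : 0 ≤ ΓH)
    (hHell : sqHellinger P₁ P₂ ≤ ΓH)
    (α : ℝ) (hα : α ∈ Set.Ico (0 : ℝ) 1) :
    (⨅ t : ℝ, t + (1 / (1 - α)) *
        ((1 / 2) * (∫ x, max (L₁ x - t) 0 ∂P₁)
          + (1 / 2) * (∫ x, max (L₂ x - t) 0 ∂P₂))) ≥
    ⨅ t : ℝ, t + (Lmax / (1 - α)) *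
        (max (Real.sqrt (max ((C / 2 - t) / Lmax) 0) - Real.sqrt ΓH) 0) ^ 2 := by
  obtain ⟨hα0, hα1⟩ := hα
  obtain ⟨hC0, hC2⟩ := hC
  have h1α : 0 < 1 - α := by linarith
  -- integrability of the truncated losses
  have hint : ∀ (t : ℝ) (L : X → ℝ) (P : Measure X), IsProbabilityMeasure P → Measurable L →
      (∀ x, L x ∈ Set.Icc 0 Lmax) → Integrable (fun x => max (L x - t) 0) P := by
    intro t L P hP hL hLb
    refine Integrable.mono' (integrable_const (Lmax + |t|))
      ((hL.sub measurable_const).max measurable_const).aestronglyMeasurable ?_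
    filter_upwards with x
    rw [Real.norm_eq_abs, abs_of_nonneg (le_max_right _ _)]
    have h1 := (hLb x).1
    have h2 := (hLb x).2
    have := abs_nonneg t
    have := neg_abs_le t
    have := le_abs_self t
    rcases le_total (L x - t) 0 with h | h
    · rw [max_eq_right h]; linarith
    · rw [max_eq_left h]; linarith
  have hintL : ∀ (L : X → ℝ) (P : Measure X), IsProbabilityMeasure P → Measurable L →
      (∀ x, L x ∈ Set.Icc 0 Lmax) → Integrable L P := by
    intro L P hP hL hLb
    refine Integrable.mono' (integrable_const Lmax) hL.aestronglyMeasurable ?_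
    filter_upwards with x
    rw [Real.norm_eq_abs, abs_of_nonneg (hLb x).1]
    exact (hLb x).2
  -- the key pointwise claim for t ≥ 0
  have claim0 : ∀ t : ℝ, 0 ≤ t →
      (max (Real.sqrt (max (C / 2 - t) 0) - Real.sqrt (Lmax * ΓH)) 0) ^ 2 ≤
        (1 / 2) * (∫ x, max (L₁ x - t) 0 ∂P₁) + (1 / 2) * (∫ x, max (L₂ x - t) 0 ∂P₂) := by
    intro t ht
    refine hellinger_core P₁ P₂ hΓ hHell (le_max_right _ _)
      (max_le (by linarith) hLmax.le)
      ((hL₁.sub measurable_const).max measurable_const)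
      ((hL₂.sub measurable_const).max measurable_const)
      (fun x => le_max_right _ _) (fun x => le_max_right _ _)
      (fun x => max_le (by linarith [(hL₁b x).2]) hLmax.le)
      (fun x => max_le (by linarith [(hL₂b x).2]) hLmax.le)
      (fun x => ?_)
    have h1 := le_max_left (L₁ x - t) 0
    have h2 := le_max_left (L₂ x - t) 0
    have h3 := le_max_right (L₁ x - t) 0
    have h4 := le_max_right (L₂ x - t) 0
    have h5 := hsum x
    rcases le_total (C / 2 - t) 0 with h | h
    · rw [max_eq_right h]; linarith
    · rw [max_eq_left h]; linarith
  -- shift identity for t < 0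
  have hshiftI : ∀ t : ℝ, t < 0 → ∀ (L : X → ℝ) (P : Measure X) (hP : IsProbabilityMeasure P),
      Measurable L → (∀ x, L x ∈ Set.Icc 0 Lmax) →
      ∫ x, max (L x - t) 0 ∂P = (∫ x, max (L x - 0) 0 ∂P) - t := by
    intro t ht L P hP hL hLb
    have e1 : ∫ x, max (L x - t) 0 ∂P = ∫ x, L x - t ∂P := by
      refine integral_congr_ae (Filter.Eventually.of_forall fun x => ?_)
      exact max_eq_left (by linarith [(hLb x).1])
    have e2 : ∫ x, max (L x - 0) 0 ∂P = ∫ x, L x ∂P := by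
      refine integral_congr_ae (Filter.Eventually.of_forall fun x => ?_)
      show max (L x - 0) 0 = L x
      rw [sub_zero]
      exact max_eq_left (hLb x).1
    rw [e1, e2, integral_sub (hintL L P hP hL hLb) (integrable_const t), integral_const]
    simp
  -- the key pointwise claim, all t
  have claim : ∀ t : ℝ,
      (max (Real.sqrt (max (C / 2 - t) 0) - Real.sqrt (Lmax * ΓH)) 0) ^ 2 ≤
        (1 / 2) * (∫ x, max (L₁ x - t) 0 ∂P₁) + (1 / 2) * (∫ x, max (L₂ x - t) 0 ∂P₂) := by
    intro t
    rcases le_or_gt 0 t with ht | ht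
    · exact claim0 t ht
    · have hs : max (C / 2 - t) 0 = C / 2 + -t := by
        rw [max_eq_left (by linarith)]; ring
      have hs0 : max (C / 2 - 0) 0 = C / 2 := by
        rw [max_eq_left (by linarith)]; ring
      have hβ : 0 ≤ Real.sqrt (Lmax * ΓH) := Real.sqrt_nonneg _
      have hsh := shift_lemma (u := C / 2) (x := -t) (β := Real.sqrt (Lmax * ΓH))
        (by linarith) (by linarith) hβ
      have hc0 := claim0 0 le_rfl
      rw [hs0] at hc0
      rw [hs, hshiftI t ht L₁ P₁ inferInstance hL₁ hL₁b, hshiftI t ht L₂ P₂ inferInstance hL₂ hL₂b]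
      linarith
  -- rewriting the RHS expression
  have hrw : ∀ t : ℝ, Lmax * (max (Real.sqrt (max ((C / 2 - t) / Lmax) 0) - Real.sqrt ΓH) 0) ^ 2
      = (max (Real.sqrt (max (C / 2 - t) 0) - Real.sqrt (Lmax * ΓH)) 0) ^ 2 := by
    intro t
    have h1 : max ((C / 2 - t) / Lmax) 0 = (max (C / 2 - t) 0) / Lmax := by
      rcases le_total (C / 2 - t) 0 with h | h
      · rw [max_eq_right h, max_eq_right (div_nonpos_iff.2 (Or.inr ⟨h, hLmax.le⟩)), zero_div]
      · rw [max_eq_left h, max_eq_left (div_nonneg h hLmax.le)]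
    have hb : 0 < Real.sqrt Lmax := Real.sqrt_pos.2 hLmax
    rw [h1, Real.sqrt_div (le_max_right _ _) Lmax, Real.sqrt_mul hLmax.le]
    have h2 : Real.sqrt Lmax * max (Real.sqrt (max (C / 2 - t) 0) / Real.sqrt Lmax
        - Real.sqrt ΓH) 0 = max (Real.sqrt (max (C / 2 - t) 0)
        - Real.sqrt Lmax * Real.sqrt ΓH) 0 := by
      rw [mul_max_of_nonneg _ _ hb.le, mul_zero]
      congr 1
      field_simp
    calc Lmax * (max (Real.sqrt (max (C / 2 - t) 0) / Real.sqrt Lmax - Real.sqrt ΓH) 0) ^ 2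
        = (Real.sqrt Lmax * max (Real.sqrt (max (C / 2 - t) 0) / Real.sqrt Lmax
            - Real.sqrt ΓH) 0) ^ 2 := by
          rw [mul_pow, Real.sq_sqrt hLmax.le]
      _ = (max (Real.sqrt (max (C / 2 - t) 0) - Real.sqrt Lmax * Real.sqrt ΓH) 0) ^ 2 := by
          rw [h2]
  -- pointwise comparison of the two objectives
  have key : ∀ t : ℝ,
      t + (Lmax / (1 - α)) * (max (Real.sqrt (max ((C / 2 - t) / Lmax) 0)
          - Real.sqrt ΓH) 0) ^ 2 ≤
      t + (1 / (1 - α)) * ((1 / 2) * (∫ x, max (L₁ x - t) 0 ∂P₁)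
          + (1 / 2) * (∫ x, max (L₂ x - t) 0 ∂P₂)) := by
    intro t
    have h1 : Lmax / (1 - α) * (max (Real.sqrt (max ((C / 2 - t) / Lmax) 0)
        - Real.sqrt ΓH) 0) ^ 2 = (1 / (1 - α)) * (Lmax * (max (Real.sqrt
        (max ((C / 2 - t) / Lmax) 0) - Real.sqrt ΓH) 0) ^ 2) := by ring
    rw [h1, hrw t]
    have h2 := claim t
    have h3 : (0:ℝ) ≤ 1 / (1 - α) := by positivity
    nlinarith [mul_le_mul_of_nonneg_left h2 h3]
  -- nonnegativity of the LHS objective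
  have Fnn : ∀ t : ℝ, 0 ≤ t + (1 / (1 - α)) * ((1 / 2) * (∫ x, max (L₁ x - t) 0 ∂P₁)
      + (1 / 2) * (∫ x, max (L₂ x - t) 0 ∂P₂)) := by
    intro t
    have i1 : (0:ℝ) ≤ ∫ x, max (L₁ x - t) 0 ∂P₁ := integral_nonneg fun x => le_max_right _ _
    have i2 : (0:ℝ) ≤ ∫ x, max (L₂ x - t) 0 ∂P₂ := integral_nonneg fun x => le_max_right _ _
    rcases le_or_gt 0 t with ht | ht
    · have : (0:ℝ) ≤ 1 / (1 - α) := by positivity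
      nlinarith
    · have j1 : -t ≤ ∫ x, max (L₁ x - t) 0 ∂P₁ := by
        have := integral_mono (μ := P₁) (integrable_const (-t))
          (hint t L₁ P₁ inferInstance hL₁ hL₁b)
          (fun x => le_max_of_le_left (by linarith [(hL₁b x).1]))
        rwa [integral_const, probReal_univ, one_smul] at this
      have j2 : -t ≤ ∫ x, max (L₂ x - t) 0 ∂P₂ := by
        have := integral_mono (μ := P₂) (integrable_const (-t))
          (hint t L₂ P₂ inferInstance hL₂ hL₂b)
          (fun x => le_max_of_le_left (by linarith [(hL₂b x).1]))
        rwa [integral_const, probReal_univ, one_smul] at this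
      have hd1 : 1 ≤ 1 / (1 - α) := by rw [le_div_iff₀ h1α]; linarith
      have hS : -t ≤ (1 / 2) * (∫ x, max (L₁ x - t) 0 ∂P₁)
          + (1 / 2) * (∫ x, max (L₂ x - t) 0 ∂P₂) := by linarith
      have := mul_le_mul hd1 hS (by linarith) (by linarith)
      linarith
  rw [ge_iff_le]
  by_cases hB : BddBelow (Set.range fun t : ℝ => t + (Lmax / (1 - α)) *
      (max (Real.sqrt (max ((C / 2 - t) / Lmax) 0) - Real.sqrt ΓH) 0) ^ 2)
  · exact le_ciInf fun t => le_trans (ciInf_le hB t) (key t)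
  · rw [Real.iInf_of_not_bddBelow hB]
    exact le_ciInf Fnn
end

section
/- Let (X, 𝒜) be a measurable space, let P₁ and P₂ be probability measures on X, let L_max > 0, and let L₁, L₂ : X → ℝ be measurable losses with 0 ≤ Lᵢ(x) ≤ L_max for all x and i ∈ {1,2}. Assume L₁(x) + L₂(x) ≥ L_max for all x ∈ X, and D_H²(P₁‖P₂) ≤ Γ_H for some Γ_H ≥ 0. Then for every α ∈ [0,1): inf_{t ∈ ℝ} { t + (1/(1−α))·(½∫(L₁−t)₊ dP₁ + ½∫(L₂−t)₊ dP₂) } ≥ inf_{t ∈ ℝ} { t + (L_max/(1−α))·( √((1/2 − t/L_max)₊) − √Γ_H )₊² }. -/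
open MeasureTheory

lemma my_integral_cs {X : Type*} [MeasurableSpace X] (μ : Measure X) (f g : X → ℝ)
    (hfm : Measurable f) (hgm : Measurable g) (hf0 : ∀ x, 0 ≤ f x) (hg0 : ∀ x, 0 ≤ g x)
    (hff : Integrable (fun x => f x * f x) μ) (hgg : Integrable (fun x => g x * g x) μ) :
    ∫ x, f x * g x ∂μ ≤ Real.sqrt (∫ x, f x * f x ∂μ) * Real.sqrt (∫ x, g x * g x ∂μ) := by
  have hfg : Integrable (fun x => f x * g x) μ := by
    refine (((hff.add hgg)).div_const 2).mono' (hfm.mul hgm).aestronglyMeasurable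
      (Filter.Eventually.of_forall fun x => ?_)
    simp only [Pi.add_apply, Real.norm_eq_abs, abs_of_nonneg (mul_nonneg (hf0 x) (hg0 x))]
    nlinarith [sq_nonneg (f x - g x)]
  set A := ∫ x, f x * f x ∂μ with hA
  set B := ∫ x, g x * g x ∂μ with hB
  have hA0 : 0 ≤ A := integral_nonneg fun x => mul_nonneg (hf0 x) (hf0 x)
  have hB0 : 0 ≤ B := integral_nonneg fun x => mul_nonneg (hg0 x) (hg0 x)
  set a := Real.sqrt A with ha
  set b := Real.sqrt B with hb
  have ha2 : a * a = A := Real.mul_self_sqrt hA0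
  have hb2 : b * b = B := Real.mul_self_sqrt hB0
  have ha0 : 0 ≤ a := Real.sqrt_nonneg _
  have hb0 : 0 ≤ b := Real.sqrt_nonneg _
  rcases eq_or_lt_of_le hA0 with hAz | hApos
  · have hfz : (fun x => f x * f x) =ᵐ[μ] 0 := by
      refine (integral_eq_zero_iff_of_nonneg (fun x => mul_nonneg (hf0 x) (hf0 x)) hff).mp ?_
      exact hAz.symm
    have : (fun x => f x * g x) =ᵐ[μ] 0 := by
      filter_upwards [hfz] with x hx
      have : f x = 0 := by
        simp only [Pi.zero_apply] at hx
        nlinarith [hf0 x]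
      simp [this]
    rw [integral_congr_ae this]
    simp [integral_zero]
    positivity
  rcases eq_or_lt_of_le hB0 with hBz | hBpos
  · have hgz : (fun x => g x * g x) =ᵐ[μ] 0 := by
      refine (integral_eq_zero_iff_of_nonneg (fun x => mul_nonneg (hg0 x) (hg0 x)) hgg).mp ?_
      exact hBz.symm
    have : (fun x => f x * g x) =ᵐ[μ] 0 := by
      filter_upwards [hgz] with x hx
      have : g x = 0 := by
        simp only [Pi.zero_apply] at hx
        nlinarith [hg0 x]
      simp [this]
    rw [integral_congr_ae this]
    simp [integral_zero]
    positivity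
  · have hapos : 0 < a := Real.sqrt_pos.mpr hApos
    have hbpos : 0 < b := Real.sqrt_pos.mpr hBpos
    have key : 0 ≤ ∫ x, (b * f x - a * g x)^2 ∂μ := integral_nonneg fun x => sq_nonneg _
    have hrw : (fun x => (b * f x - a * g x)^2)
        = fun x => b*b*(f x * f x) + a*a*(g x * g x) - 2*a*b*(f x * g x) := by
      funext x; ring
    rw [hrw] at key
    have hi1 : Integrable (fun x => b*b*(f x * f x) + a*a*(g x * g x)) μ := by
      exact (hff.const_mul _).add (hgg.const_mul _)
    rw [integral_sub hi1 (hfg.const_mul _),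
      integral_add (hff.const_mul _) (hgg.const_mul _), integral_const_mul, integral_const_mul,
      integral_const_mul, ha2, hb2] at key
    have h2 : 2*a*b * ∫ x, f x * g x ∂μ ≤ 2*a*b*(a*b) := by nlinarith
    have habpos : 0 < 2*a*b := by positivity
    exact le_of_mul_le_mul_left (by linarith) habpos

/-- Abstract density form of the Hellinger lower bound. -/
lemma my_density_bound {X : Type*} [MeasurableSpace X] (ν : Measure X) [IsFiniteMeasure ν]
    (p₁ p₂ f₁ f₂ : X → ℝ)
    (hp₁m : Measurable p₁) (hp₂m : Measurable p₂)
    (hp₁0 : ∀ x, 0 ≤ p₁ x) (hp₂0 : ∀ x, 0 ≤ p₂ x)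
    (hip1 : Integrable p₁ ν) (hip2 : Integrable p₂ ν)
    (hint1 : ∫ x, p₁ x ∂ν = 1) (hint2 : ∫ x, p₂ x ∂ν = 1)
    (hf₁m : Measurable f₁) (hf₂m : Measurable f₂)
    (hf₁0 : ∀ x, 0 ≤ f₁ x) (hf₂0 : ∀ x, 0 ≤ f₂ x)
    (C : ℝ) (hf₁le : ∀ x, f₁ x ≤ C) (hf₂le : ∀ x, f₂ x ≤ C)
    (K : ℝ) (hK : 0 ≤ K) (hsumK : ∀ x, 2 * K ≤ f₁ x + f₂ x)
    (Γ : ℝ) (hΓ : 0 ≤ Γ)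
    (hHell : 1 - ∫ x, Real.sqrt (p₁ x * p₂ x) ∂ν ≤ Γ) :
    K * (1 - Real.sqrt (2 * Γ)) ≤
      (1/2) * ∫ x, p₁ x * f₁ x ∂ν + (1/2) * ∫ x, p₂ x * f₂ x ∂ν := by
  have hqm : Measurable (fun x => Real.sqrt (p₁ x * p₂ x)) := (hp₁m.mul hp₂m).sqrt
  have hq0 : ∀ x, 0 ≤ Real.sqrt (p₁ x * p₂ x) := fun x => Real.sqrt_nonneg _
  have hq_le : ∀ x, Real.sqrt (p₁ x * p₂ x) ≤ (p₁ x + p₂ x) / 2 := by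
    intro x
    have h1 : p₁ x * p₂ x ≤ ((p₁ x + p₂ x)/2)^2 := by nlinarith [sq_nonneg (p₁ x - p₂ x)]
    calc Real.sqrt (p₁ x * p₂ x) ≤ Real.sqrt (((p₁ x + p₂ x)/2)^2) := Real.sqrt_le_sqrt h1
      _ = (p₁ x + p₂ x)/2 := Real.sqrt_sq (div_nonneg (add_nonneg (hp₁0 x) (hp₂0 x)) (by norm_num))
  have hadd_int : Integrable (fun x => p₁ x + p₂ x) ν := by exact hip1.add hip2
  have hq_int : Integrable (fun x => Real.sqrt (p₁ x * p₂ x)) ν := by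
    refine (hadd_int.div_const 2).mono' hqm.aestronglyMeasurable
      (Filter.Eventually.of_forall fun x => ?_)
    simp only [Real.norm_eq_abs, abs_of_nonneg (hq0 x)]
    exact hq_le x
  set ρ : ℝ := ∫ x, Real.sqrt (p₁ x * p₂ x) ∂ν with hρ
  have hρ_le : ρ ≤ 1 := by
    have h := integral_mono hq_int (hadd_int.div_const 2) hq_le
    rw [integral_div, integral_add hip1 hip2, hint1, hint2] at h
    rw [hρ]; linarith
  -- Cauchy-Schwarz bound on ∫|p₁ - p₂|
  have hmulself₁ : ∀ x, Real.sqrt (p₁ x) * Real.sqrt (p₁ x) = p₁ x :=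
    fun x => Real.mul_self_sqrt (hp₁0 x)
  have hmulself₂ : ∀ x, Real.sqrt (p₂ x) * Real.sqrt (p₂ x) = p₂ x :=
    fun x => Real.mul_self_sqrt (hp₂0 x)
  have hr₁r₂ : ∀ x, Real.sqrt (p₁ x) * Real.sqrt (p₂ x) = Real.sqrt (p₁ x * p₂ x) :=
    fun x => (Real.sqrt_mul (hp₁0 x) _).symm
  have hr₁m : Measurable (fun x => Real.sqrt (p₁ x)) := hp₁m.sqrt
  have hr₂m : Measurable (fun x => Real.sqrt (p₂ x)) := hp₂m.sqrt
  have hdm : Measurable (fun x => |Real.sqrt (p₁ x) - Real.sqrt (p₂ x)|) := (hr₁m.sub hr₂m).abs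
  have hσm : Measurable (fun x => Real.sqrt (p₁ x) + Real.sqrt (p₂ x)) := hr₁m.add hr₂m
  have hdd_eq : (fun x => |Real.sqrt (p₁ x) - Real.sqrt (p₂ x)| *
        |Real.sqrt (p₁ x) - Real.sqrt (p₂ x)|)
      = fun x => p₁ x + p₂ x - 2 * Real.sqrt (p₁ x * p₂ x) := by
    funext x
    have h1 := abs_mul_abs_self (Real.sqrt (p₁ x) - Real.sqrt (p₂ x))
    nlinarith [hmulself₁ x, hmulself₂ x, hr₁r₂ x]
  have hσσ_eq : (fun x => (Real.sqrt (p₁ x) + Real.sqrt (p₂ x)) *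
        (Real.sqrt (p₁ x) + Real.sqrt (p₂ x)))
      = fun x => p₁ x + p₂ x + 2 * Real.sqrt (p₁ x * p₂ x) := by
    funext x
    nlinarith [hmulself₁ x, hmulself₂ x, hr₁r₂ x]
  have hsub2_int : Integrable (fun x => p₁ x + p₂ x - 2 * Real.sqrt (p₁ x * p₂ x)) ν := by
    exact hadd_int.sub (hq_int.const_mul 2)
  have hadd2_int : Integrable (fun x => p₁ x + p₂ x + 2 * Real.sqrt (p₁ x * p₂ x)) ν := by
    exact hadd_int.add (hq_int.const_mul 2)
  have hdd_int : Integrable (fun x => |Real.sqrt (p₁ x) - Real.sqrt (p₂ x)| *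
      |Real.sqrt (p₁ x) - Real.sqrt (p₂ x)|) ν := by rw [hdd_eq]; exact hsub2_int
  have hσσ_int : Integrable (fun x => (Real.sqrt (p₁ x) + Real.sqrt (p₂ x)) *
      (Real.sqrt (p₁ x) + Real.sqrt (p₂ x))) ν := by rw [hσσ_eq]; exact hadd2_int
  have hdd_val : ∫ x, |Real.sqrt (p₁ x) - Real.sqrt (p₂ x)| *
      |Real.sqrt (p₁ x) - Real.sqrt (p₂ x)| ∂ν = 2 - 2 * ρ := by
    rw [hdd_eq, integral_sub hadd_int (hq_int.const_mul 2),
      integral_add hip1 hip2, integral_const_mul, hint1, hint2, hρ]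
    ring
  have hσσ_val : ∫ x, (Real.sqrt (p₁ x) + Real.sqrt (p₂ x)) *
      (Real.sqrt (p₁ x) + Real.sqrt (p₂ x)) ∂ν = 2 + 2 * ρ := by
    rw [hσσ_eq, integral_add hadd_int (hq_int.const_mul 2),
      integral_add hip1 hip2, integral_const_mul, hint1, hint2, hρ]
    ring
  have hcs : ∫ x, |Real.sqrt (p₁ x) - Real.sqrt (p₂ x)| *
      (Real.sqrt (p₁ x) + Real.sqrt (p₂ x)) ∂ν
      ≤ Real.sqrt (2 - 2*ρ) * Real.sqrt (2 + 2*ρ) := by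
    have h := my_integral_cs ν _ _ hdm hσm (fun x => abs_nonneg _)
      (fun x => add_nonneg (Real.sqrt_nonneg _) (Real.sqrt_nonneg _)) hdd_int hσσ_int
    rwa [hdd_val, hσσ_val] at h
  have habs_eq : (fun x => |p₁ x - p₂ x|) = fun x => |Real.sqrt (p₁ x) - Real.sqrt (p₂ x)| *
      (Real.sqrt (p₁ x) + Real.sqrt (p₂ x)) := by
    funext x
    have h : p₁ x - p₂ x = (Real.sqrt (p₁ x) - Real.sqrt (p₂ x)) *
        (Real.sqrt (p₁ x) + Real.sqrt (p₂ x)) := by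
      nlinarith [hmulself₁ x, hmulself₂ x]
    rw [h, abs_mul, abs_of_nonneg (add_nonneg (Real.sqrt_nonneg (p₁ x)) (Real.sqrt_nonneg (p₂ x)))]
  have hTbound : ∫ x, |p₁ x - p₂ x| ∂ν ≤ 2 * Real.sqrt (2 * Γ) := by
    rw [habs_eq]
    refine le_trans hcs ?_
    have h1 : Real.sqrt (2 - 2*ρ) ≤ Real.sqrt (2 * Γ) :=
      Real.sqrt_le_sqrt (by linarith)
    have h2 : Real.sqrt (2 + 2*ρ) ≤ 2 := by
      have h4 : (2 : ℝ) + 2*ρ ≤ 4 := by linarith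
      calc Real.sqrt (2 + 2*ρ) ≤ Real.sqrt 4 := Real.sqrt_le_sqrt h4
        _ = 2 := by rw [show (4:ℝ) = 2^2 by norm_num, Real.sqrt_sq (by norm_num : (0:ℝ) ≤ 2)]
    calc Real.sqrt (2 - 2*ρ) * Real.sqrt (2 + 2*ρ)
        ≤ Real.sqrt (2*Γ) * 2 :=
          mul_le_mul h1 h2 (Real.sqrt_nonneg _) (Real.sqrt_nonneg _)
      _ = 2 * Real.sqrt (2*Γ) := by ring
  have habs_int : Integrable (fun x => |p₁ x - p₂ x|) ν := by exact (hip1.sub hip2).abs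
  have hmin_eq : (fun x => min (p₁ x) (p₂ x)) = fun x => (p₁ x + p₂ x - |p₁ x - p₂ x|)/2 := by
    funext x
    rcases le_total (p₁ x) (p₂ x) with h | h
    · rw [min_eq_left h, abs_of_nonpos (by linarith)]; ring
    · rw [min_eq_right h, abs_of_nonneg (by linarith)]; ring
  have hsubabs_int : Integrable (fun x => p₁ x + p₂ x - |p₁ x - p₂ x|) ν := by
    exact hadd_int.sub habs_int
  have hmin_int : Integrable (fun x => min (p₁ x) (p₂ x)) ν := by
    rw [hmin_eq]; exact hsubabs_int.div_const 2
  have hmin_val : 1 - Real.sqrt (2 * Γ) ≤ ∫ x, min (p₁ x) (p₂ x) ∂ν := by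
    rw [hmin_eq, integral_div, integral_sub hadd_int habs_int,
      integral_add hip1 hip2, hint1, hint2]
    linarith
  -- pointwise bound
  have hpt : ∀ x, 2 * K * min (p₁ x) (p₂ x) ≤ p₁ x * f₁ x + p₂ x * f₂ x := by
    intro x
    have hm0 : 0 ≤ min (p₁ x) (p₂ x) := le_min (hp₁0 x) (hp₂0 x)
    have h1 : f₁ x * min (p₁ x) (p₂ x) ≤ f₁ x * p₁ x :=
      mul_le_mul_of_nonneg_left (min_le_left _ _) (hf₁0 x)
    have h2 : f₂ x * min (p₁ x) (p₂ x) ≤ f₂ x * p₂ x :=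
      mul_le_mul_of_nonneg_left (min_le_right _ _) (hf₂0 x)
    have h3 : 2 * K * min (p₁ x) (p₂ x) ≤ (f₁ x + f₂ x) * min (p₁ x) (p₂ x) :=
      mul_le_mul_of_nonneg_right (hsumK x) hm0
    nlinarith
  -- integrability of p·f
  have hi1 : Integrable (fun x => p₁ x * f₁ x) ν := by
    refine (hip1.const_mul C).mono' (hp₁m.mul hf₁m).aestronglyMeasurable
      (Filter.Eventually.of_forall fun x => ?_)
    rw [Real.norm_eq_abs, abs_of_nonneg (mul_nonneg (hp₁0 x) (hf₁0 x))]
    calc p₁ x * f₁ x ≤ p₁ x * C := mul_le_mul_of_nonneg_left (hf₁le x) (hp₁0 x)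
      _ = C * p₁ x := by ring
  have hi2 : Integrable (fun x => p₂ x * f₂ x) ν := by
    refine (hip2.const_mul C).mono' (hp₂m.mul hf₂m).aestronglyMeasurable
      (Filter.Eventually.of_forall fun x => ?_)
    rw [Real.norm_eq_abs, abs_of_nonneg (mul_nonneg (hp₂0 x) (hf₂0 x))]
    calc p₂ x * f₂ x ≤ p₂ x * C := mul_le_mul_of_nonneg_left (hf₂le x) (hp₂0 x)
      _ = C * p₂ x := by ring
  have hi12 : Integrable (fun x => p₁ x * f₁ x + p₂ x * f₂ x) ν := by exact hi1.add hi2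
  have hmain : 2 * K * ∫ x, min (p₁ x) (p₂ x) ∂ν ≤
      (∫ x, p₁ x * f₁ x ∂ν) + ∫ x, p₂ x * f₂ x ∂ν := by
    have h := integral_mono (hmin_int.const_mul (2*K)) hi12 hpt
    rwa [integral_const_mul, integral_add hi1 hi2] at h
  have hfin : K * (1 - Real.sqrt (2*Γ)) ≤ K * ∫ x, min (p₁ x) (p₂ x) ∂ν :=
    mul_le_mul_of_nonneg_left hmin_val hK
  linarith

lemma my_key {X : Type*} [MeasurableSpace X]
    (P₁ P₂ : Measure X) [IsProbabilityMeasure P₁] [IsProbabilityMeasure P₂]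
    (Lmax : ℝ) (hLmax : 0 < Lmax)
    (L₁ L₂ : X → ℝ) (hL₁ : Measurable L₁) (hL₂ : Measurable L₂)
    (hL₁b : ∀ x, L₁ x ∈ Set.Icc 0 Lmax) (hL₂b : ∀ x, L₂ x ∈ Set.Icc 0 Lmax)
    (hsum : ∀ x, Lmax ≤ L₁ x + L₂ x)
    (ΓH : ℝ) (hΓ : 0 ≤ ΓH)
    (hHell : sqHellinger P₁ P₂ ≤ ΓH)
    (t : ℝ) (ht : 0 ≤ t) :
    Lmax * (max (Real.sqrt (max (1 / 2 - t / Lmax) 0) - Real.sqrt ΓH) 0) ^ 2 ≤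
      (1 / 2) * (∫ x, max (L₁ x - t) 0 ∂P₁) + (1 / 2) * (∫ x, max (L₂ x - t) 0 ∂P₂) := by
  have hac1 : P₁ ≪ (P₁ + P₂) := by
    refine Measure.AbsolutelyContinuous.mk fun s hs h0 => ?_
    rw [Measure.add_apply] at h0
    exact (add_eq_zero.mp h0).1
  have hac2 : P₂ ≪ (P₁ + P₂) := by
    refine Measure.AbsolutelyContinuous.mk fun s hs h0 => ?_
    rw [Measure.add_apply] at h0
    exact (add_eq_zero.mp h0).2
  set p₁ : X → ℝ := fun x => (P₁.rnDeriv (P₁ + P₂) x).toReal with hp₁def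
  set p₂ : X → ℝ := fun x => (P₂.rnDeriv (P₁ + P₂) x).toReal with hp₂def
  have hint1 : ∫ x, p₁ x ∂(P₁ + P₂) = 1 := by
    rw [hp₁def, Measure.integral_toReal_rnDeriv hac1]; simp
  have hint2 : ∫ x, p₂ x ∂(P₁ + P₂) = 1 := by
    rw [hp₂def, Measure.integral_toReal_rnDeriv hac2]; simp
  have hch1 : ∫ x, max (L₁ x - t) 0 ∂P₁ =
      ∫ x, p₁ x * max (L₁ x - t) 0 ∂(P₁ + P₂) := by
    rw [← MeasureTheory.integral_rnDeriv_smul hac1 (f := fun x => max (L₁ x - t) 0)]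
    simp [hp₁def, smul_eq_mul]
  have hch2 : ∫ x, max (L₂ x - t) 0 ∂P₂ =
      ∫ x, p₂ x * max (L₂ x - t) 0 ∂(P₁ + P₂) := by
    rw [← MeasureTheory.integral_rnDeriv_smul hac2 (f := fun x => max (L₂ x - t) 0)]
    simp [hp₂def, smul_eq_mul]
  -- constants
  have hc0 : (0:ℝ) ≤ max (1/2 - t/Lmax) 0 := le_max_right _ _
  have hc_half : max (1/2 - t/Lmax) 0 ≤ 1/2 := by
    apply max_le _ (by norm_num)
    have : 0 ≤ t / Lmax := div_nonneg ht hLmax.le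
    linarith
  set c : ℝ := max (1/2 - t/Lmax) 0 with hcdef
  have hK : 0 ≤ Lmax * c := mul_nonneg hLmax.le hc0
  have hsumK : ∀ x, 2 * (Lmax * c) ≤ max (L₁ x - t) 0 + max (L₂ x - t) 0 := by
    intro x
    rcases le_or_gt (1/2 - t/Lmax) 0 with h | h
    · rw [hcdef, max_eq_right h]
      simpa using add_nonneg (le_max_right (L₁ x - t) 0) (le_max_right (L₂ x - t) 0)
    · rw [hcdef, max_eq_left h.le]
      have h1 : L₁ x - t ≤ max (L₁ x - t) 0 := le_max_left _ _
      have h2 : L₂ x - t ≤ max (L₂ x - t) 0 := le_max_left _ _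
      have h3 := hsum x
      have h4 : 2 * (Lmax * (1/2 - t/Lmax)) = Lmax - 2*t := by field_simp
      rw [h4]; linarith
  have hbound := my_density_bound (P₁ + P₂) p₁ p₂
    (fun x => max (L₁ x - t) 0) (fun x => max (L₂ x - t) 0)
    ((Measure.measurable_rnDeriv P₁ _).ennreal_toReal)
    ((Measure.measurable_rnDeriv P₂ _).ennreal_toReal)
    (fun x => ENNReal.toReal_nonneg) (fun x => ENNReal.toReal_nonneg)
    Measure.integrable_toReal_rnDeriv Measure.integrable_toReal_rnDeriv
    hint1 hint2
    ((hL₁.sub measurable_const).max measurable_const)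
    ((hL₂.sub measurable_const).max measurable_const)
    (fun x => le_max_right _ _) (fun x => le_max_right _ _)
    Lmax (fun x => max_le (by linarith [(hL₁b x).2]) hLmax.le)
    (fun x => max_le (by linarith [(hL₂b x).2]) hLmax.le)
    (Lmax * c) hK hsumK ΓH hΓ hHell
  rw [← hch1, ← hch2] at hbound
  -- now pure algebra
  have hInonneg : 0 ≤ (1/2) * (∫ x, max (L₁ x - t) 0 ∂P₁)
      + (1/2) * (∫ x, max (L₂ x - t) 0 ∂P₂) := by
    have h1 : 0 ≤ ∫ x, max (L₁ x - t) 0 ∂P₁ := integral_nonneg fun x => le_max_right _ _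
    have h2 : 0 ≤ ∫ x, max (L₂ x - t) 0 ∂P₂ := integral_nonneg fun x => le_max_right _ _
    linarith
  have hs0 : 0 ≤ Real.sqrt c := Real.sqrt_nonneg _
  have hg0 : 0 ≤ Real.sqrt ΓH := Real.sqrt_nonneg _
  rcases le_or_gt (Real.sqrt c) (Real.sqrt ΓH) with hsg | hgs
  · rw [max_eq_right (by linarith : Real.sqrt c - Real.sqrt ΓH ≤ 0)]
    simpa using hInonneg
  · rw [max_eq_left (by linarith : (0:ℝ) ≤ Real.sqrt c - Real.sqrt ΓH)]
    have hs2 : (Real.sqrt c)^2 = c := Real.sq_sqrt hc0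
    have hg2 : (Real.sqrt ΓH)^2 = ΓH := Real.sq_sqrt hΓ
    have h2g : Real.sqrt (2*ΓH) = Real.sqrt 2 * Real.sqrt ΓH := Real.sqrt_mul (by norm_num) _
    have hsqrt2 : (Real.sqrt 2)^2 = 2 := Real.sq_sqrt (by norm_num)
    have hsqrt2_0 : (0:ℝ) ≤ Real.sqrt 2 := Real.sqrt_nonneg _
    have hs2c : Real.sqrt 2 * c ≤ Real.sqrt c := by
      have h1 : Real.sqrt c ≤ Real.sqrt (1/2) := Real.sqrt_le_sqrt hc_half
      have h2 : Real.sqrt 2 * Real.sqrt (1/2) = 1 := by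
        rw [← Real.sqrt_mul (by norm_num : (0:ℝ) ≤ 2)]
        norm_num
      calc Real.sqrt 2 * c = (Real.sqrt 2 * Real.sqrt c) * Real.sqrt c :=
            (by rw [mul_assoc, ← sq, hs2] :
              (Real.sqrt 2 * Real.sqrt c) * Real.sqrt c = Real.sqrt 2 * c).symm
        _ ≤ (Real.sqrt 2 * Real.sqrt (1/2)) * Real.sqrt c :=
            mul_le_mul_of_nonneg_right (mul_le_mul_of_nonneg_left h1 hsqrt2_0) hs0
        _ = Real.sqrt c := by rw [h2, one_mul]
    have hkey : (Real.sqrt c - Real.sqrt ΓH)^2 ≤ c * (1 - Real.sqrt 2 * Real.sqrt ΓH) := by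
      nlinarith [mul_nonneg hg0 (by linarith :
        (0:ℝ) ≤ 2*Real.sqrt c - Real.sqrt ΓH - Real.sqrt 2 * c)]
    have hfin : Lmax * (Real.sqrt c - Real.sqrt ΓH)^2 ≤ Lmax * c * (1 - Real.sqrt (2*ΓH)) := by
      rw [h2g]
      calc Lmax * (Real.sqrt c - Real.sqrt ΓH)^2
          ≤ Lmax * (c * (1 - Real.sqrt 2 * Real.sqrt ΓH)) :=
            mul_le_mul_of_nonneg_left hkey hLmax.le
        _ = Lmax * c * (1 - Real.sqrt 2 * Real.sqrt ΓH) := by ring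
    linarith

theorem balanced_two_point_hellinger_cvar
    {X : Type*} [MeasurableSpace X]
    (P₁ P₂ : Measure X) [IsProbabilityMeasure P₁] [IsProbabilityMeasure P₂]
    (Lmax : ℝ) (hLmax : 0 < Lmax)
    (L₁ L₂ : X → ℝ) (hL₁ : Measurable L₁) (hL₂ : Measurable L₂)
    (hL₁b : ∀ x, L₁ x ∈ Set.Icc 0 Lmax) (hL₂b : ∀ x, L₂ x ∈ Set.Icc 0 Lmax)
    (hsum : ∀ x, Lmax ≤ L₁ x + L₂ x)
    (ΓH : ℝ) (hΓ : 0 ≤ ΓH)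
    (hHell : sqHellinger P₁ P₂ ≤ ΓH)
    (α : ℝ) (hα : α ∈ Set.Ico (0 : ℝ) 1) :
    (⨅ t : ℝ, t + (1 / (1 - α)) *
        ((1 / 2) * (∫ x, max (L₁ x - t) 0 ∂P₁)
          + (1 / 2) * (∫ x, max (L₂ x - t) 0 ∂P₂))) ≥
    ⨅ t : ℝ, t + (Lmax / (1 - α)) *
        (max (Real.sqrt (max (1 / 2 - t / Lmax) 0) - Real.sqrt ΓH) 0) ^ 2 := by
  obtain ⟨hα0, hα1⟩ := hα
  have h1α : (0:ℝ) < 1 - α := by linarith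
  have hβ0 : (0:ℝ) < 1/(1-α) := by positivity
  have hβ1 : (1:ℝ) ≤ 1/(1-α) := by
    rw [le_div_iff₀ h1α]; linarith
  -- integrability of truncated losses
  have hIL : ∀ (μ : Measure X), IsProbabilityMeasure μ → ∀ (L : X → ℝ), Measurable L →
      (∀ x, L x ∈ Set.Icc 0 Lmax) → ∀ t : ℝ, Integrable (fun x => max (L x - t) 0) μ := by
    intro μ hμ L hLm hLb t
    haveI := hμ
    refine (integrable_const (Lmax + |t|)).mono'
      ((hLm.sub measurable_const).max measurable_const).aestronglyMeasurable
      (Filter.Eventually.of_forall fun x => ?_)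
    rw [Real.norm_eq_abs, abs_of_nonneg (le_max_right _ _)]
    apply max_le
    · have h1 := (hLb x).2
      have h2 := neg_abs_le t
      linarith
    · have := abs_nonneg t
      linarith
  have hIL₁ : Integrable L₁ P₁ := by
    refine (integrable_const Lmax).mono' hL₁.aestronglyMeasurable
      (Filter.Eventually.of_forall fun x => ?_)
    rw [Real.norm_eq_abs, abs_of_nonneg (hL₁b x).1]
    exact (hL₁b x).2
  have hIL₂ : Integrable L₂ P₂ := by
    refine (integrable_const Lmax).mono' hL₂.aestronglyMeasurable
      (Filter.Eventually.of_forall fun x => ?_)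
    rw [Real.norm_eq_abs, abs_of_nonneg (hL₂b x).1]
    exact (hL₂b x).2
  -- lower bound on the inner objective
  have hlow : ∀ t : ℝ, max (-t) 0 ≤ (1/2) * (∫ x, max (L₁ x - t) 0 ∂P₁)
      + (1/2) * (∫ x, max (L₂ x - t) 0 ∂P₂) := by
    intro t
    have h1 : ∫ x, max (-t) 0 ∂P₁ ≤ ∫ x, max (L₁ x - t) 0 ∂P₁ := by
      refine integral_mono (integrable_const _) (hIL P₁ inferInstance L₁ hL₁ hL₁b t) fun x => ?_
      exact max_le_max (by linarith [(hL₁b x).1]) le_rfl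
    have h2 : ∫ x, max (-t) 0 ∂P₂ ≤ ∫ x, max (L₂ x - t) 0 ∂P₂ := by
      refine integral_mono (integrable_const _) (hIL P₂ inferInstance L₂ hL₂ hL₂b t) fun x => ?_
      exact max_le_max (by linarith [(hL₂b x).1]) le_rfl
    rw [integral_const] at h1 h2
    simp only [probReal_univ, one_smul] at h1 h2
    linarith
  refine le_ciInf fun t => ?_
  by_cases hbdd : BddBelow (Set.range fun u : ℝ => u + (Lmax / (1 - α)) *
      (max (Real.sqrt (max (1 / 2 - u / Lmax) 0) - Real.sqrt ΓH) 0) ^ 2)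
  · rcases le_or_gt 0 t with ht | ht
    · refine le_trans (ciInf_le hbdd t) ?_
      have hk := my_key P₁ P₂ Lmax hLmax L₁ L₂ hL₁ hL₂ hL₁b hL₂b hsum ΓH hΓ hHell t ht
      set M := max (Real.sqrt (max (1/2 - t/Lmax) 0) - Real.sqrt ΓH) 0 with hM
      have e1 : Lmax/(1-α) * M^2 = (1/(1-α)) * (Lmax * M^2) := by ring
      have e2 : (1/(1-α)) * (Lmax * M^2) ≤ (1/(1-α)) *
          ((1/2) * (∫ x, max (L₁ x - t) 0 ∂P₁) + (1/2) * (∫ x, max (L₂ x - t) 0 ∂P₂)) :=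
        mul_le_mul_of_nonneg_left hk hβ0.le
      linarith
    · refine le_trans (ciInf_le hbdd 0) ?_
      have hk0 := my_key P₁ P₂ Lmax hLmax L₁ L₂ hL₁ hL₂ hL₁b hL₂b hsum ΓH hΓ hHell 0 le_rfl
      have he1 : (fun x => max (L₁ x - (0:ℝ)) 0) = L₁ :=
        funext fun x => by rw [sub_zero]; exact max_eq_left (hL₁b x).1
      have he2 : (fun x => max (L₂ x - (0:ℝ)) 0) = L₂ :=
        funext fun x => by rw [sub_zero]; exact max_eq_left (hL₂b x).1
      rw [he1, he2] at hk0
      have hm1 : (fun x => max (L₁ x - t) 0) = fun x => L₁ x - t :=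
        funext fun x => max_eq_left (by linarith [(hL₁b x).1])
      have hm2 : (fun x => max (L₂ x - t) 0) = fun x => L₂ x - t :=
        funext fun x => max_eq_left (by linarith [(hL₂b x).1])
      rw [hm1, hm2, integral_sub hIL₁ (integrable_const t), integral_sub hIL₂ (integrable_const t),
        integral_const, integral_const]
      simp only [probReal_univ, one_smul]
      set M₀ := max (Real.sqrt (max (1/2 - (0:ℝ)/Lmax) 0) - Real.sqrt ΓH) 0 with hM₀
      set A₁ := ∫ x, L₁ x ∂P₁ with hA₁
      set A₂ := ∫ x, L₂ x ∂P₂ with hA₂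
      set u := 1/(1-α) with hu
      have e1 : Lmax/(1-α) * M₀^2 = u * (Lmax * M₀^2) := by rw [hu]; ring
      have e2 : u * (Lmax * M₀^2) ≤ u * ((1/2) * A₁ + (1/2) * A₂) :=
        mul_le_mul_of_nonneg_left hk0 hβ0.le
      have e3 : 0 ≤ t * (1 - u) := by nlinarith [ht.le, hβ1]

      have e4 : t + u * ((1/2) * (A₁ - t) + (1/2) * (A₂ - t))
          = t * (1 - u) + u * ((1/2) * A₁ + (1/2) * A₂) := by ring
      linarith
  · rw [Real.iInf_of_not_bddBelow hbdd]
    have hl := hlow t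
    rcases le_or_gt 0 t with ht | ht
    · have h0 : (0:ℝ) ≤ max (-t) 0 := le_max_right _ _
      have h5 : 0 ≤ (1/(1-α)) * ((1/2) * (∫ x, max (L₁ x - t) 0 ∂P₁)
          + (1/2) * (∫ x, max (L₂ x - t) 0 ∂P₂)) :=
        mul_nonneg hβ0.le (by linarith)
      linarith
    · have hmax : max (-t) 0 = -t := max_eq_left (by linarith)
      rw [hmax] at hl
      have h4 : (1/(1-α)) * (-t) ≤ (1/(1-α)) * ((1/2) * (∫ x, max (L₁ x - t) 0 ∂P₁)
          + (1/2) * (∫ x, max (L₂ x - t) 0 ∂P₂)) :=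
        mul_le_mul_of_nonneg_left hl hβ0.le
      have h5 : -t ≤ (1/(1-α)) * (-t) := le_mul_of_one_le_left (by linarith) hβ1
      linarith
end

section
/- Fix n ≥ 1, Δ > 0, and a measurable estimator θ̂ : ℝⁿ → ℝ. Let P₊ be the n-fold product of the Gaussian measure N(Δ,1) on ℝ and P₋ the n-fold product of N(−Δ,1), and define the bounded estimation losses L₊(y) = min(|θ̂(y) − Δ|, 2Δ) and L₋(y) = min(|θ̂(y) + Δ|, 2Δ) for y ∈ ℝⁿ. Then for every α ∈ [0,1): inf_{t ∈ ℝ} { t + (1/(1−α))·(½∫(L₊−t)₊ dP₊ + ½∫(L₋−t)₊ dP₋) } ≥ 2Δ·Ψ_α(2√n·Δ). -/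
open MeasureTheory MeasureTheory.Measure Finset ProbabilityTheory
open scoped ENNReal NNReal

/-- The function `Ψ_α` from the scalar minimization lemma. -/
noncomputable def Psi (α ρ : ℝ) : ℝ :=
  if α = 0 then (max (1 - ρ) 0) ^ 2 / 2
  else if ρ ≤ α then 1 / 2 - ρ ^ 2 / (2 * α)
  else if ρ ≤ 1 then (1 - ρ) ^ 2 / (2 * (1 - α))
  else 0

theorem my_lintegral_pi_prod {n : ℕ} (μ : Measure ℝ) [SigmaFinite μ]
    (f : Fin n → ℝ → ℝ≥0∞) (hf : ∀ i, Measurable (f i)) :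
    ∫⁻ (y : Fin n → ℝ), ∏ i, f i (y i) ∂(Measure.pi fun _ => μ) = ∏ i, ∫⁻ x, f i x ∂μ := by
  induction n with
  | zero => simp
  | succ n ih =>
      calc
        ∫⁻ (y : Fin (n+1) → ℝ), ∏ i, f i (y i) ∂(Measure.pi fun _ => μ)
            = ∫⁻ (z : ℝ × (Fin n → ℝ)),
                f 0 z.1 * ∏ i : Fin n, f i.succ (z.2 i)
                ∂(μ.prod (Measure.pi fun _ => μ)) := by
          rw [← ((measurePreserving_piFinSuccAbove (fun _ : Fin (n+1) => μ) 0).symm).lintegral_comp_emb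
            (MeasurableEquiv.measurableEmbedding _)]
          congr 1
          ext z
          simp_rw [MeasurableEquiv.piFinSuccAbove_symm_apply, Fin.insertNthEquiv,
            Fin.prod_univ_succ, Fin.insertNth_zero]
          simp [Fin.zero_succAbove]
        _ = (∫⁻ x, f 0 x ∂μ) * ∏ i : Fin n, ∫⁻ x, f i.succ x ∂μ := by
          rw [lintegral_prod_mul (f := f 0) (g := fun v : Fin n → ℝ => ∏ i, f i.succ (v i)) (hf 0).aemeasurable
            (Finset.measurable_prod _ (fun i _ => (hf i.succ).comp (measurable_pi_apply i))).aemeasurable,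
            ih (fun i => f i.succ) (fun i => hf i.succ)]
        _ = ∏ i, ∫⁻ x, f i x ∂μ := by rw [Fin.prod_univ_succ]

theorem my_pi_gauss {n : ℕ} (m : ℝ) :
    Measure.pi (fun _ : Fin n => gaussianReal m 1)
      = (volume : Measure (Fin n → ℝ)).withDensity
          (fun y => ∏ i, gaussianPDF m 1 (y i)) := by
  refine Measure.pi_eq fun s hs => ?_
  rw [withDensity_apply _ (MeasurableSet.univ_pi hs)]
  have h1 : ∀ i : Fin n, gaussianReal m 1 (s i) = ∫⁻ x in s i, gaussianPDF m 1 x := by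
    intro i
    rw [gaussianReal_apply m one_ne_zero (s i)]
  rw [← lintegral_indicator (MeasurableSet.univ_pi hs)]
  have h2 : (Set.pi Set.univ s).indicator (fun y : Fin n → ℝ => ∏ i, gaussianPDF m 1 (y i))
      = fun y => ∏ i, (s i).indicator (gaussianPDF m 1) (y i) := by
    ext y
    by_cases hy : y ∈ Set.pi Set.univ s
    · rw [Set.indicator_of_mem hy]
      refine Finset.prod_congr rfl fun i _ => ?_
      rw [Set.indicator_of_mem (hy i (Set.mem_univ i))]
    · rw [Set.indicator_of_notMem hy]
      have : ∃ i, y i ∉ s i := by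
        by_contra hc
        push_neg at hc
        exact hy fun i _ => hc i
      obtain ⟨i, hi⟩ := this
      exact (Finset.prod_eq_zero (Finset.mem_univ i) (by simp [Set.indicator_of_notMem hi])).symm
  rw [h2, volume_pi,
    my_lintegral_pi_prod volume _ (fun i => (measurable_gaussianPDF m 1).indicator (hs i))]
  exact Finset.prod_congr rfl fun i _ => by rw [h1 i, lintegral_indicator (hs i)]

theorem my_repr {n : ℕ} (m : ℝ) (u : (Fin n → ℝ) → ℝ) (hu : Measurable u) :
    ∫ y, u y ∂(Measure.pi fun _ : Fin n => gaussianReal m 1)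
      = ∫ y, (∏ i, gaussianPDFReal m 1 (y i)) * u y ∂(volume : Measure (Fin n → ℝ)) := by
  have hd : (fun y : Fin n → ℝ => ∏ i, gaussianPDF m 1 (y i))
      = fun y => ((∏ i, (gaussianPDFReal m 1 (y i)).toNNReal : ℝ≥0) : ℝ≥0∞) := by
    ext y
    rw [ENNReal.coe_finset_prod]
    rfl
  rw [my_pi_gauss m, hd, integral_withDensity_eq_integral_smul]
  · refine integral_congr_ae (Filter.Eventually.of_forall fun y => ?_)
    simp only []
    rw [NNReal.smul_def, NNReal.coe_prod]
    congr 1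
    exact Finset.prod_congr rfl fun i _ =>
      Real.coe_toNNReal _ (gaussianPDFReal_nonneg m 1 (y i))
  · exact Finset.measurable_prod _ fun i _ =>
      ((measurable_gaussianPDFReal m 1).comp (measurable_pi_apply i)).real_toNNReal

theorem my_sqrt_gauss_mul {Δ : ℝ} (x : ℝ) :
    Real.sqrt (gaussianPDFReal Δ 1 x * gaussianPDFReal (-Δ) 1 x)
      = Real.exp (-(Δ^2)/2) * gaussianPDFReal 0 1 x := by
  simp only [gaussianPDFReal]
  rw [show ((1 : ℝ≥0) : ℝ) = (1 : ℝ) from rfl]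
  have hc : (0:ℝ) ≤ (Real.sqrt (2 * Real.pi * 1))⁻¹ :=
    inv_nonneg.2 (Real.sqrt_nonneg _)
  rw [show (Real.sqrt (2 * Real.pi * 1))⁻¹ * Real.exp (-(x - Δ) ^ 2 / (2 * 1)) *
        ((Real.sqrt (2 * Real.pi * 1))⁻¹ * Real.exp (-(x - -Δ) ^ 2 / (2 * 1)))
      = ((Real.sqrt (2 * Real.pi * 1))⁻¹)^2 *
        (Real.exp (-(x - Δ) ^ 2 / (2 * 1)) * Real.exp (-(x - -Δ) ^ 2 / (2 * 1))) by ring]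
  rw [Real.sqrt_mul (sq_nonneg _), Real.sqrt_sq hc, ← Real.exp_add]
  have : Real.exp (-(x - Δ) ^ 2 / (2 * 1) + -(x - -Δ) ^ 2 / (2 * 1))
      = (Real.exp (-(Δ^2)/2 + -(x - 0)^2 / (2*1)))^2 := by
    rw [← Real.exp_nat_mul]
    congr 1
    push_cast
    ring
  rw [this, Real.sqrt_sq (Real.exp_nonneg _), Real.exp_add]
  ring

theorem my_tv_bound {n : ℕ} (hn : 1 ≤ n) {Δ : ℝ} (hΔ : 0 < Δ)
    (u : (Fin n → ℝ) → ℝ) (hu : Measurable u)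
    (h0 : ∀ y, 0 ≤ u y) (h1 : ∀ y, u y ≤ 1) :
    ∫ y, u y ∂(Measure.pi fun _ : Fin n => gaussianReal (-Δ) 1)
      - ∫ y, u y ∂(Measure.pi fun _ : Fin n => gaussianReal Δ 1)
      ≤ Real.sqrt n * Δ := by
  set qp : (Fin n → ℝ) → ℝ := fun y => ∏ i, gaussianPDFReal Δ 1 (y i) with hqp
  set qm : (Fin n → ℝ) → ℝ := fun y => ∏ i, gaussianPDFReal (-Δ) 1 (y i) with hqm
  set sp : (Fin n → ℝ) → ℝ := fun y => ∏ i, Real.sqrt (gaussianPDFReal Δ 1 (y i)) with hsp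
  set sm : (Fin n → ℝ) → ℝ := fun y => ∏ i, Real.sqrt (gaussianPDFReal (-Δ) 1 (y i)) with hsm
  have hspn : ∀ y, 0 ≤ sp y := fun y => Finset.prod_nonneg fun i _ => Real.sqrt_nonneg _
  have hsmn : ∀ y, 0 ≤ sm y := fun y => Finset.prod_nonneg fun i _ => Real.sqrt_nonneg _
  have hqpn : ∀ y, 0 ≤ qp y := fun y =>
    Finset.prod_nonneg fun i _ => gaussianPDFReal_nonneg _ _ _
  have hqmn : ∀ y, 0 ≤ qm y := fun y =>
    Finset.prod_nonneg fun i _ => gaussianPDFReal_nonneg _ _ _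
  have hsqp : ∀ y, sp y ^ 2 = qp y := by
    intro y
    rw [hsp, hqp, ← Finset.prod_pow]
    exact Finset.prod_congr rfl fun i _ => Real.sq_sqrt (gaussianPDFReal_nonneg _ _ _)
  have hsqm : ∀ y, sm y ^ 2 = qm y := by
    intro y
    rw [hsm, hqm, ← Finset.prod_pow]
    exact Finset.prod_congr rfl fun i _ => Real.sq_sqrt (gaussianPDFReal_nonneg _ _ _)
  set An : ℝ := Real.exp (-(Δ^2)/2) ^ n with hAn
  have hss : ∀ y, sp y * sm y = ∏ i, Real.exp (-(Δ^2)/2) * gaussianPDFReal 0 1 (y i) := by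
    intro y
    rw [hsp, hsm, ← Finset.prod_mul_distrib]
    exact Finset.prod_congr rfl fun i _ => by
      rw [← Real.sqrt_mul (gaussianPDFReal_nonneg _ _ _), my_sqrt_gauss_mul]
  -- integrability of products
  have int_qp : Integrable qp (volume : Measure (Fin n → ℝ)) :=
    Integrable.fintype_prod (f := fun _ : Fin n => gaussianPDFReal Δ 1)
      (fun _ => integrable_gaussianPDFReal Δ 1)
  have int_qm : Integrable qm (volume : Measure (Fin n → ℝ)) :=
    Integrable.fintype_prod (f := fun _ : Fin n => gaussianPDFReal (-Δ) 1)
      (fun _ => integrable_gaussianPDFReal (-Δ) 1)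
  have int_ss : Integrable (fun y => sp y * sm y) (volume : Measure (Fin n → ℝ)) := by
    have : Integrable (fun y : Fin n → ℝ =>
        ∏ i, Real.exp (-(Δ^2)/2) * gaussianPDFReal 0 1 (y i)) volume :=
      Integrable.fintype_prod (f := fun _ : Fin n => fun x => Real.exp (-(Δ^2)/2) * gaussianPDFReal 0 1 x)
        (fun _ => (integrable_gaussianPDFReal 0 1).const_mul _)
    exact this.congr (Filter.Eventually.of_forall fun y => (hss y).symm)
  -- integral values
  have igp : ∫ y, qp y ∂(volume : Measure (Fin n → ℝ)) = 1 := by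
    rw [hqp]
    rw [volume_pi, MeasureTheory.integral_fintype_prod_eq_pow (ι := Fin n) (gaussianPDFReal Δ 1),
      integral_gaussianPDFReal_eq_one Δ one_ne_zero, one_pow]
  have igm : ∫ y, qm y ∂(volume : Measure (Fin n → ℝ)) = 1 := by
    rw [hqm]
    rw [volume_pi, MeasureTheory.integral_fintype_prod_eq_pow (ι := Fin n) (gaussianPDFReal (-Δ) 1),
      integral_gaussianPDFReal_eq_one (-Δ) one_ne_zero, one_pow]
  have iss : ∫ y, sp y * sm y ∂(volume : Measure (Fin n → ℝ)) = An := by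
    rw [integral_congr_ae (Filter.Eventually.of_forall hss), volume_pi,
      MeasureTheory.integral_fintype_prod_eq_pow (ι := Fin n)
        (fun x => Real.exp (-(Δ^2)/2) * gaussianPDFReal 0 1 x)]
    rw [integral_const_mul, integral_gaussianPDFReal_eq_one 0 one_ne_zero, mul_one, hAn,
      Fintype.card_fin]
  -- main chain
  have hAn1 : An < 1 := by
    apply pow_lt_one₀ (Real.exp_nonneg _) _ (by omega)
    rw [Real.exp_lt_one_iff]
    nlinarith
  have hAn0 : 0 < An := pow_pos (Real.exp_pos _) n
  set H : ℝ := Real.sqrt (2 - 2*An) with hHdef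
  have hH0 : 0 < H := Real.sqrt_pos.2 (by linarith)
  have hH2 : H^2 = 2 - 2*An := Real.sq_sqrt (by linarith)
  set ε : ℝ := H/2 with hεdef
  have hε : 0 < ε := by positivity
  -- measurability
  have hqp_meas : Measurable qp :=
    Finset.measurable_prod _ fun i _ =>
      (measurable_gaussianPDFReal _ _).comp (measurable_pi_apply i)
  have hqm_meas : Measurable qm :=
    Finset.measurable_prod _ fun i _ =>
      (measurable_gaussianPDFReal _ _).comp (measurable_pi_apply i)
  -- more integrability
  have intA : Integrable (fun y => qm y + qp y) (volume : Measure (Fin n → ℝ)) :=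
    int_qm.add int_qp
  have intB : Integrable (fun y => 2*(sp y * sm y)) (volume : Measure (Fin n → ℝ)) :=
    int_ss.const_mul 2
  have int_diff2 : Integrable (fun y => (sm y - sp y)^2) (volume : Measure (Fin n → ℝ)) := by
    refine ((intA.sub intB).congr (Filter.Eventually.of_forall fun y => ?_))
    simp only [Pi.add_apply, Pi.sub_apply]
    rw [← hsqp y, ← hsqm y]; ring
  have int_sum2 : Integrable (fun y => (sm y + sp y)^2) (volume : Measure (Fin n → ℝ)) := by
    refine ((intA.add intB).congr (Filter.Eventually.of_forall fun y => ?_))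
    simp only [Pi.add_apply]
    rw [← hsqp y, ← hsqm y]; ring
  have i_diff2 : ∫ y, (sm y - sp y)^2 ∂(volume : Measure (Fin n → ℝ)) = 2 - 2*An := by
    have : (fun y => (sm y - sp y)^2) = fun y => (qm y + qp y) - 2*(sp y * sm y) := by
      funext y; rw [← hsqp y, ← hsqm y]; ring
    rw [this, integral_sub intA intB, integral_add int_qm int_qp, igm, igp,
      integral_const_mul, iss]
    ring
  have i_sum2 : ∫ y, (sm y + sp y)^2 ∂(volume : Measure (Fin n → ℝ)) = 2 + 2*An := by
    have : (fun y => (sm y + sp y)^2) = fun y => (qm y + qp y) + 2*(sp y * sm y) := by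
      funext y; rw [← hsqp y, ← hsqm y]; ring
    rw [this, integral_add intA intB, integral_add int_qm int_qp, igm, igp,
      integral_const_mul, iss]
    ring
  set D : (Fin n → ℝ) → ℝ := fun y => qm y - qp y with hD
  have int_D : Integrable D (volume : Measure (Fin n → ℝ)) := int_qm.sub int_qp
  have int_absD : Integrable (fun y => |D y|) (volume : Measure (Fin n → ℝ)) := int_D.abs
  have int_Du : Integrable (fun y => D y * u y) (volume : Measure (Fin n → ℝ)) := by
    refine Integrable.mono' int_absD ((hqm_meas.sub hqp_meas).mul hu).aestronglyMeasurable
      (Filter.Eventually.of_forall fun y => ?_)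
    rw [Real.norm_eq_abs, abs_mul]
    calc |D y| * |u y| ≤ |D y| * 1 := by
          exact mul_le_mul_of_nonneg_left (abs_le.2 ⟨by linarith [h0 y], h1 y⟩) (abs_nonneg _)
      _ = |D y| := mul_one _
  have int_qpu : Integrable (fun y => qp y * u y) (volume : Measure (Fin n → ℝ)) := by
    refine Integrable.mono' int_qp (hqp_meas.mul hu).aestronglyMeasurable
      (Filter.Eventually.of_forall fun y => ?_)
    rw [Real.norm_eq_abs, abs_mul, abs_of_nonneg (hqpn y)]
    calc qp y * |u y| ≤ qp y * 1 :=
          mul_le_mul_of_nonneg_left (abs_le.2 ⟨by linarith [h0 y], h1 y⟩) (hqpn y)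
      _ = qp y := mul_one _
  have int_qmu : Integrable (fun y => qm y * u y) (volume : Measure (Fin n → ℝ)) := by
    refine Integrable.mono' int_qm (hqm_meas.mul hu).aestronglyMeasurable
      (Filter.Eventually.of_forall fun y => ?_)
    rw [Real.norm_eq_abs, abs_mul, abs_of_nonneg (hqmn y)]
    calc qm y * |u y| ≤ qm y * 1 :=
          mul_le_mul_of_nonneg_left (abs_le.2 ⟨by linarith [h0 y], h1 y⟩) (hqmn y)
      _ = qm y := mul_one _
  -- express difference of integrals
  have hrepr : ∫ y, u y ∂(Measure.pi fun _ : Fin n => gaussianReal (-Δ) 1)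
      - ∫ y, u y ∂(Measure.pi fun _ : Fin n => gaussianReal Δ 1)
      = ∫ y, D y * u y ∂(volume : Measure (Fin n → ℝ)) := by
    rw [my_repr (-Δ) u hu, my_repr Δ u hu, ← integral_sub int_qmu int_qpu]
    refine integral_congr_ae (Filter.Eventually.of_forall fun y => ?_)
    simp only [hD]; ring
  -- pointwise amgm bound on |D|
  have amgm : ∀ a b : ℝ, 0 ≤ b → a * b ≤ (1/(2*ε))*a^2 + (ε/2)*b^2 := by
    intro a b hb
    rw [← sub_nonneg]
    have hkey : (1/(2*ε))*a^2 + (ε/2)*b^2 - a*b = (1/(2*ε))*(a - ε*b)^2 := by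
      field_simp; ring
    rw [hkey]; positivity
  have habs : ∀ y, |D y| ≤ (1/(2*ε))*(sm y - sp y)^2 + (ε/2)*(sm y + sp y)^2 := by
    intro y
    have h1' : |D y| = |sm y - sp y| * (sm y + sp y) := by
      have : D y = (sm y - sp y) * (sm y + sp y) := by
        simp only [hD]; rw [← hsqp y, ← hsqm y]; ring
      rw [this, abs_mul, abs_of_nonneg (add_nonneg (hsmn y) (hspn y))]
    rw [h1']
    calc |sm y - sp y| * (sm y + sp y)
        ≤ (1/(2*ε))*|sm y - sp y|^2 + (ε/2)*(sm y + sp y)^2 :=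
          amgm _ _ (add_nonneg (hsmn y) (hspn y))
      _ = (1/(2*ε))*(sm y - sp y)^2 + (ε/2)*(sm y + sp y)^2 := by rw [sq_abs]
  have i_absD : ∫ y, |D y| ∂(volume : Measure (Fin n → ℝ)) ≤ 2*H := by
    calc ∫ y, |D y| ∂(volume : Measure (Fin n → ℝ))
        ≤ ∫ y, (1/(2*ε))*(sm y - sp y)^2 + (ε/2)*(sm y + sp y)^2
            ∂(volume : Measure (Fin n → ℝ)) :=
          integral_mono int_absD ((int_diff2.const_mul _).add (int_sum2.const_mul _)) habs
      _ = (1/(2*ε))*(2 - 2*An) + (ε/2)*(2 + 2*An) := by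
          rw [integral_add (int_diff2.const_mul _) (int_sum2.const_mul _),
            integral_const_mul, integral_const_mul, i_diff2, i_sum2]
      _ ≤ 2*H := by
          have h2A : 2 + 2*An ≤ 4 := by linarith
          have e1 : (1/(2*ε))*(2 - 2*An) = H := by
            rw [hεdef, ← hH2]; field_simp
          have e2 : (ε/2)*(2 + 2*An) ≤ H := by
            calc (ε/2)*(2 + 2*An) ≤ (ε/2)*4 := by
                  exact mul_le_mul_of_nonneg_left h2A (by positivity)
              _ = H := by rw [hεdef]; ring
          linarith
  have iD0 : ∫ y, D y ∂(volume : Measure (Fin n → ℝ)) = 0 := by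
    simp only [hD]
    rw [integral_sub int_qm int_qp, igm, igp]
    norm_num
  have hstep : ∫ y, D y * u y ∂(volume : Measure (Fin n → ℝ)) ≤ H := by
    calc ∫ y, D y * u y ∂(volume : Measure (Fin n → ℝ))
        ≤ ∫ y, |D y|/2 + D y/2 ∂(volume : Measure (Fin n → ℝ)) := by
          refine integral_mono int_Du ((int_absD.div_const 2).add (int_D.div_const 2))
            fun y => ?_
          have := abs_mul (D y) (u y - 1/2)
          have h2 : |D y| * |u y - 1/2| ≤ |D y| * (1/2) := by
            refine mul_le_mul_of_nonneg_left (abs_le.2 ⟨?_, ?_⟩) (abs_nonneg _)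
            · linarith [h0 y]
            · linarith [h1 y]
          have h3 : D y * (u y - 1/2) ≤ |D y * (u y - 1/2)| := le_abs_self _
          rw [this] at h3
          nlinarith [abs_nonneg (D y)]
      _ = (∫ y, |D y| ∂(volume : Measure (Fin n → ℝ)))/2
          + (∫ y, D y ∂(volume : Measure (Fin n → ℝ)))/2 := by
          rw [integral_add (int_absD.div_const 2) (int_D.div_const 2),
            integral_div, integral_div]
      _ ≤ H := by rw [iD0]; linarith
  have hHle : H ≤ Real.sqrt n * Δ := by
    have hAexp : An = Real.exp (n * (-(Δ^2)/2)) := by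
      rw [hAn, ← Real.exp_nat_mul]
    have hexp_ge : 1 + (n:ℝ) * (-(Δ^2)/2) ≤ An := by
      rw [hAexp]; linarith [Real.add_one_le_exp ((n:ℝ) * (-(Δ^2)/2))]
    have h2 : 2 - 2*An ≤ (n:ℝ) * Δ^2 := by
      have : 1 - (n:ℝ)*Δ^2/2 ≤ An := by
        calc (1 : ℝ) - (n:ℝ)*Δ^2/2 = 1 + n * (-(Δ^2)/2) := by ring
          _ ≤ An := hexp_ge
      linarith
    calc H = Real.sqrt (2 - 2*An) := hHdef
      _ ≤ Real.sqrt ((n:ℝ) * Δ^2) := Real.sqrt_le_sqrt h2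
      _ = Real.sqrt n * Δ := by
          rw [Real.sqrt_mul (Nat.cast_nonneg n), Real.sqrt_sq hΔ.le]
  rw [hrepr]
  exact hstep.trans hHle

set_option maxHeartbeats 2000000 in
theorem gaussian_mean_estimation_cvar
    (n : ℕ) (hn : 1 ≤ n) (Δ : ℝ) (hΔ : 0 < Δ)
    (θ : (Fin n → ℝ) → ℝ) (hθ : Measurable θ)
    (α : ℝ) (hα : α ∈ Set.Ico (0 : ℝ) 1) :
    (⨅ t : ℝ, t + (1 / (1 - α)) *
        ((1 / 2) * (∫ y, max (min |θ y - Δ| (2 * Δ) - t) 0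
            ∂(Measure.pi fun _ : Fin n => gaussianReal Δ 1))
          + (1 / 2) * (∫ y, max (min |θ y + Δ| (2 * Δ) - t) 0
            ∂(Measure.pi fun _ : Fin n => gaussianReal (-Δ) 1)))) ≥
    2 * Δ * Psi α (2 * Real.sqrt n * Δ) := by
  obtain ⟨hα0, hα1⟩ := hα
  have h1α : 0 < 1 - α := by linarith
  have hn0 : (0:ℝ) < n := by exact_mod_cast hn
  have hsn : 0 < Real.sqrt n := Real.sqrt_pos.2 hn0
  set ρ : ℝ := 2 * Real.sqrt n * Δ with hρ
  have hρ0 : 0 < ρ := by positivity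
  have hsnΔ : Real.sqrt n * Δ = ρ / 2 := by rw [hρ]; ring
  set b : ℝ := max (1 - Real.sqrt n * Δ) 0 with hb
  have hb0 : 0 ≤ b := le_max_right _ _
  have hb1 : b ≤ 1 := max_le (by nlinarith) zero_le_one
  set e : ℝ := 1 / (1 - α) with he
  have he0 : 0 < e := by positivity
  have hee : e * (1 - α) = 1 := by rw [he]; field_simp
  set K : ℝ := Δ * min 1 (b * e) with hK
  set Pp : Measure (Fin n → ℝ) := Measure.pi fun _ : Fin n => gaussianReal Δ 1 with hPp
  set Pm : Measure (Fin n → ℝ) := Measure.pi fun _ : Fin n => gaussianReal (-Δ) 1 with hPm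
  haveI : IsProbabilityMeasure Pp := by rw [hPp]; infer_instance
  haveI : IsProbabilityMeasure Pm := by rw [hPm]; infer_instance
  -- step 1: the inf is at least K
  have main : ∀ t : ℝ, K ≤ t + (1 / (1 - α)) *
      ((1 / 2) * (∫ y, max (min |θ y - Δ| (2 * Δ) - t) 0 ∂Pp)
        + (1 / 2) * (∫ y, max (min |θ y + Δ| (2 * Δ) - t) 0 ∂Pm)) := by
    intro t
    set f : (Fin n → ℝ) → ℝ := fun y => max (min |θ y - Δ| (2 * Δ) - t) 0 with hfdef
    set g : (Fin n → ℝ) → ℝ := fun y => max (min |θ y + Δ| (2 * Δ) - t) 0 with hgdef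
    have hf_meas : Measurable f :=
      (((hθ.sub measurable_const).abs.min measurable_const).sub measurable_const).max
        measurable_const
    have hg_meas : Measurable g :=
      (((hθ.add measurable_const).abs.min measurable_const).sub measurable_const).max
        measurable_const
    have hf0 : ∀ y, 0 ≤ f y := fun y => le_max_right _ _
    have hg0 : ∀ y, 0 ≤ g y := fun y => le_max_right _ _
    have hLp0 : ∀ y, 0 ≤ min |θ y - Δ| (2*Δ) := fun y => le_min (abs_nonneg _) (by positivity)
    have hLm0 : ∀ y, 0 ≤ min |θ y + Δ| (2*Δ) := fun y => le_min (abs_nonneg _) (by positivity)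
    have hfB : ∀ y, f y ≤ max (2*Δ - t) 0 := fun y =>
      max_le_max (sub_le_sub_right (min_le_right _ _) t) le_rfl
    have hgB : ∀ y, g y ≤ max (2*Δ - t) 0 := fun y =>
      max_le_max (sub_le_sub_right (min_le_right _ _) t) le_rfl
    have int_f : Integrable f Pp := by
      refine Integrable.mono' (integrable_const (max (2*Δ - t) 0))
        hf_meas.aestronglyMeasurable (Filter.Eventually.of_forall fun y => ?_)
      rw [Real.norm_eq_abs, abs_of_nonneg (hf0 y)]; exact hfB y
    have int_g : Integrable g Pm := by
      refine Integrable.mono' (integrable_const (max (2*Δ - t) 0))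
        hg_meas.aestronglyMeasurable (Filter.Eventually.of_forall fun y => ?_)
      rw [Real.norm_eq_abs, abs_of_nonneg (hg0 y)]; exact hgB y
    have hKΔ : K ≤ Δ := by
      rw [hK]
      exact mul_le_of_le_one_right hΔ.le (min_le_left _ _)
    rcases le_or_gt Δ t with hcase | hcase
    · -- easy case t ≥ Δ
      have hIfn : 0 ≤ ∫ y, f y ∂Pp := integral_nonneg hf0
      have hIgn : 0 ≤ ∫ y, g y ∂Pm := integral_nonneg hg0
      have h1 : 0 ≤ (1 / (1 - α)) *
          ((1 / 2) * (∫ y, f y ∂Pp) + (1 / 2) * (∫ y, g y ∂Pm)) :=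
        mul_nonneg (by positivity)
          (add_nonneg (mul_nonneg (by norm_num) hIfn) (mul_nonneg (by norm_num) hIgn))
      calc K ≤ Δ := hKΔ
        _ ≤ t := hcase
        _ ≤ _ := by linarith
    · -- main case t < Δ
      set c₀ : ℝ := max (-t) 0 with hc₀def
      set c₁ : ℝ := Δ - t with hc₁def
      have hc₀ : 0 ≤ c₀ := le_max_right _ _
      have hc₀c₁ : c₀ < c₁ := max_lt (by linarith) (by linarith)
      set d : ℝ := 2 * (c₁ - c₀) with hddef
      have hd : 0 < d := by rw [hddef]; linarith
      set u : (Fin n → ℝ) → ℝ := fun y => min ((f y - c₀) / d) 1 with hudef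
      have hu_meas : Measurable u :=
        ((hf_meas.sub measurable_const).div_const d).min measurable_const
      have hfc₀ : ∀ y, c₀ ≤ f y := fun y =>
        max_le_max (by linarith [hLp0 y]) le_rfl
      have hgc₀ : ∀ y, c₀ ≤ g y := fun y =>
        max_le_max (by linarith [hLm0 y]) le_rfl
      have hu0 : ∀ y, 0 ≤ u y := fun y =>
        le_min (div_nonneg (by linarith [hfc₀ y]) hd.le) zero_le_one
      have hu1 : ∀ y, u y ≤ 1 := fun y => min_le_right _ _
      have P1 : ∀ y, c₀ + d * u y ≤ f y := by
        intro y
        rcases le_or_gt ((f y - c₀) / d) 1 with h | h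
        · rw [hudef]
          simp only [min_eq_left h]
          rw [mul_div_cancel₀ _ (ne_of_gt hd)]
          linarith
        · rw [hudef]
          simp only [min_eq_right h.le]
          have := (lt_div_iff₀ hd).mp h
          linarith
      have sumfg : ∀ y, 2 * c₁ ≤ f y + g y := by
        intro y
        have habs : 2*Δ ≤ |θ y - Δ| + |θ y + Δ| := by
          have h1 : |(θ y + Δ) - (θ y - Δ)| ≤ |θ y + Δ| + |θ y - Δ| := abs_sub _ _
          have h2 : (θ y + Δ) - (θ y - Δ) = 2*Δ := by ring
          rw [h2, abs_of_pos (by linarith)] at h1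
          linarith
        have hmin : 2*Δ ≤ min |θ y - Δ| (2*Δ) + min |θ y + Δ| (2*Δ) := by
          rcases le_or_gt |θ y - Δ| (2*Δ) with h1 | h1 <;>
            rcases le_or_gt |θ y + Δ| (2*Δ) with h2 | h2
          · rw [min_eq_left h1, min_eq_left h2]; linarith
          · rw [min_eq_left h1, min_eq_right h2.le]; linarith [abs_nonneg (θ y - Δ)]
          · rw [min_eq_right h1.le, min_eq_left h2]; linarith [abs_nonneg (θ y + Δ)]
          · rw [min_eq_right h1.le, min_eq_right h2.le]; linarith
        have h3 : min |θ y - Δ| (2*Δ) - t ≤ f y := le_max_left _ _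
        have h4 : min |θ y + Δ| (2*Δ) - t ≤ g y := le_max_left _ _
        rw [hc₁def]
        linarith
      have P2 : ∀ y, c₀ + d * (1 - u y) ≤ g y := by
        intro y
        rcases le_or_gt ((f y - c₀) / d) 1 with h | h
        · rw [hudef]
          simp only [min_eq_left h]
          have hdc : d * ((f y - c₀) / d) = f y - c₀ := mul_div_cancel₀ _ (ne_of_gt hd)
          have : d * (1 - (f y - c₀)/d) = d - (f y - c₀) := by
            rw [mul_sub, hdc, mul_one]
          rw [this]
          have := sumfg y
          rw [hddef] at *
          linarith
        · rw [hudef]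
          simp only [min_eq_right h.le]
          have := hgc₀ y
          linarith
      -- integrate
      have int_up : Integrable u Pp := by
        refine Integrable.mono' (integrable_const 1) hu_meas.aestronglyMeasurable
          (Filter.Eventually.of_forall fun y => ?_)
        rw [Real.norm_eq_abs, abs_of_nonneg (hu0 y)]; exact hu1 y
      have int_um : Integrable u Pm := by
        refine Integrable.mono' (integrable_const 1) hu_meas.aestronglyMeasurable
          (Filter.Eventually.of_forall fun y => ?_)
        rw [Real.norm_eq_abs, abs_of_nonneg (hu0 y)]; exact hu1 y
      have int_cu : Integrable (fun y => c₀ + d * u y) Pp :=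
        (integrable_const c₀).add (int_up.const_mul d)
      have int_1u : Integrable (fun y => 1 - u y) Pm := (integrable_const 1).sub int_um
      have int_cu' : Integrable (fun y => c₀ + d * (1 - u y)) Pm :=
        (integrable_const c₀).add (int_1u.const_mul d)
      have hIf : c₀ + d * ∫ y, u y ∂Pp ≤ ∫ y, f y ∂Pp := by
        have h : ∫ y, (c₀ + d * u y) ∂Pp ≤ ∫ y, f y ∂Pp := integral_mono int_cu int_f P1
        have hval : ∫ y, (c₀ + d * u y) ∂Pp = c₀ + d * ∫ y, u y ∂Pp := by
          rw [integral_add (integrable_const c₀) (int_up.const_mul d), integral_const,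
            probReal_univ, one_smul, integral_const_mul]
        linarith [h, hval.symm.le, hval.le]
      have hIg : c₀ + d * (1 - ∫ y, u y ∂Pm) ≤ ∫ y, g y ∂Pm := by
        have h : ∫ y, (c₀ + d * (1 - u y)) ∂Pm ≤ ∫ y, g y ∂Pm := integral_mono int_cu' int_g P2
        have hval : ∫ y, (c₀ + d * (1 - u y)) ∂Pm = c₀ + d * (1 - ∫ y, u y ∂Pm) := by
          rw [integral_add (integrable_const c₀) (int_1u.const_mul d),
            integral_const, probReal_univ, one_smul, integral_const_mul,
            integral_sub (integrable_const 1) int_um, integral_const, probReal_univ, one_smul]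
        linarith [h, hval.le, hval.symm.le]
      have htv : ∫ y, u y ∂Pm - ∫ y, u y ∂Pp ≤ Real.sqrt n * Δ := by
        rw [hPp, hPm]
        exact my_tv_bound hn hΔ u hu_meas hu0 hu1
      have hup0 : 0 ≤ ∫ y, u y ∂Pp := integral_nonneg hu0
      have hum1 : ∫ y, u y ∂Pm ≤ 1 := by
        have h := integral_mono int_um (integrable_const 1) hu1
        rwa [integral_const, probReal_univ, one_smul] at h
      -- abstract the four integrals as real numbers
      obtain ⟨Iup, hIup⟩ : ∃ x : ℝ, x = ∫ y, u y ∂Pp := ⟨_, rfl⟩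
      obtain ⟨Ium, hIum⟩ : ∃ x : ℝ, x = ∫ y, u y ∂Pm := ⟨_, rfl⟩
      obtain ⟨If, hIfe⟩ : ∃ x : ℝ, x = ∫ y, f y ∂Pp := ⟨_, rfl⟩
      obtain ⟨Ig, hIge⟩ : ∃ x : ℝ, x = ∫ y, g y ∂Pm := ⟨_, rfl⟩
      rw [← hIup, ← hIum] at htv
      rw [← hIup] at hup0
      rw [← hIum] at hum1
      rw [← hIup, ← hIfe] at hIf
      rw [← hIum, ← hIge] at hIg
      have core : b ≤ 1 + Iup - Ium := by
        rw [hb]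
        exact max_le (by linarith) (by linarith)
      have hS : c₀ + (c₁ - c₀) * b ≤ (1 / 2) * If + (1 / 2) * Ig := by
        have hmul : (c₁ - c₀) * b ≤ (c₁ - c₀) * (1 + Iup - Ium) :=
          mul_le_mul_of_nonneg_left core (by linarith)
        have hdd : d = 2 * (c₁ - c₀) := hddef
        nlinarith [hIf, hIg]
      -- conclude scalar bound
      have hfinal : K ≤ t + e * (c₀ + (c₁ - c₀) * b) := by
        rcases le_or_gt t 0 with ht | ht
        · have hc₀t : c₀ = -t := max_eq_left (by linarith)
          have hKbe : K ≤ Δ * (b * e) := by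
            rw [hK]
            exact mul_le_mul_of_nonneg_left (min_le_right _ _) hΔ.le
          have hc : c₀ + (c₁ - c₀) * b = -t + b * (Δ - t + t) := by
            rw [hc₀t, hc₁def]; ring
          rw [hc]
          have h1e : 1 - e = -(α * e) := by
            have : e * (1 - α) = 1 := hee
            nlinarith
          nlinarith [mul_nonneg (mul_nonneg hα0 he0.le) (neg_nonneg.2 ht),
            mul_nonneg hb0 (mul_nonneg he0.le (neg_nonneg.2 ht))]
        · have hc₀t : c₀ = 0 := max_eq_right (by linarith)
          rw [hc₀t, hc₁def]
          rcases le_or_gt (b * e) 1 with hbe | hbe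
          · have hKbe : K ≤ Δ * (b * e) := by
              rw [hK]
              exact mul_le_mul_of_nonneg_left (min_le_right _ _) hΔ.le
            have : t + e * ((Δ - t - 0) * b) - Δ * (b * e) = t * (1 - e * b) := by ring
            nlinarith [mul_nonneg ht.le (sub_nonneg.2 hbe), mul_pos he0 hΔ]
          · have hK1 : K ≤ Δ := hKΔ
            have : t + e * ((Δ - t - 0) * b) ≥ t + (Δ - t) := by
              have h1 : 1 * (Δ - t) ≤ (e * b) * (Δ - t) := by
                apply mul_le_mul_of_nonneg_right _ (by linarith)
                nlinarith
              nlinarith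
            linarith
      have hfin2 : K ≤ t + e * ((1 / 2) * If + (1 / 2) * Ig) := by
        have h := mul_le_mul_of_nonneg_left hS he0.le
        exact hfinal.trans (by linarith [h])
      rw [hIfe, hIge] at hfin2
      rw [← he]
      exact hfin2
  -- step 2: K is at least the Psi bound
  have hKPsi : 2 * Δ * Psi α ρ ≤ K := by
    rw [Psi, hK]
    by_cases hz : α = 0
    · subst hz
      simp only [eq_self_iff_true, if_true]
      set m : ℝ := max (1 - ρ) 0 with hm
      have hm0 : 0 ≤ m := le_max_right _ _
      have hm1 : m ≤ 1 := max_le (by linarith) zero_le_one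
      have hmb : m ≤ b := by
        rw [hm, hb]
        exact max_le_max (by nlinarith) le_rfl
      have heq : e = 1 := by rw [he]; norm_num
      have h2 : 2 * Δ * (m ^ 2 / 2) = Δ * m ^ 2 := by ring
      rw [h2, heq, mul_one]
      have : m ^ 2 ≤ min 1 b := by
        refine le_min ?_ ?_
        · nlinarith
        · nlinarith
      exact mul_le_mul_of_nonneg_left this hΔ.le
    · have hz0 : 0 < α := lt_of_le_of_ne hα0 (Ne.symm hz)
      simp only [if_neg hz]
      rcases le_or_gt ρ α with hρα | hρα
      · simp only [if_pos hρα]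
        have h2 : 2 * Δ * (1/2 - ρ^2/(2*α)) = Δ * (1 - ρ^2/α) := by
          field_simp
        rw [h2]
        refine mul_le_mul_of_nonneg_left (le_min ?_ ?_) hΔ.le
        · have : 0 ≤ ρ^2/α := by positivity
          linarith
        · have hbge : 1 - ρ/2 ≤ b := by rw [hb, hsnΔ]; exact le_max_left _ _
          have hkey : (1 - ρ^2/α) * (1 - α) ≤ 1 - ρ/2 := by
            have hexp : (1 - ρ^2/α) * (1 - α) = 1 - α - ρ^2/α + ρ^2 := by
              field_simp; ring
            have h3 : 0 ≤ (1 - α) * ρ^2 / α := by positivity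
            have h4 : ρ/2 ≤ α := by linarith
            rw [hexp]
            have h5 : ρ^2 - ρ^2/α = -((1-α) * ρ^2 / α) := by field_simp; ring
            nlinarith
          calc 1 - ρ^2/α = ((1 - ρ^2/α) * (1 - α)) * e := by
                linear_combination (ρ^2/α - 1) * hee
            _ ≤ (1 - ρ/2) * e := mul_le_mul_of_nonneg_right hkey he0.le
            _ ≤ b * e := mul_le_mul_of_nonneg_right hbge he0.le
      · simp only [if_neg (not_le.mpr hρα)]
        rcases le_or_gt ρ 1 with hρ1 | hρ1
        · simp only [if_pos hρ1]
          have h2 : 2 * Δ * ((1-ρ)^2 / (2*(1-α))) = Δ * ((1-ρ)^2 * e) := by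
            rw [he]; field_simp
          rw [h2]
          refine mul_le_mul_of_nonneg_left (le_min ?_ ?_) hΔ.le
          · have h3 : (1-ρ)^2 ≤ 1 - α := by nlinarith
            calc (1-ρ)^2 * e ≤ (1-α) * e := mul_le_mul_of_nonneg_right h3 he0.le
              _ = 1 := by linear_combination hee
          · have hbge : 1 - ρ/2 ≤ b := by rw [hb, hsnΔ]; exact le_max_left _ _
            have h4 : (1-ρ)^2 ≤ 1 - ρ/2 := by
              nlinarith [mul_nonneg hρ0.le (sub_nonneg.2 hρ1)]
            have h3 : (1-ρ)^2 ≤ b := h4.trans hbge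
            exact mul_le_mul_of_nonneg_right h3 he0.le
        · simp only [if_neg (not_le.mpr hρ1)]
          have : 0 ≤ Δ * min 1 (b * e) :=
            mul_nonneg hΔ.le (le_min zero_le_one (mul_nonneg hb0 he0.le))
          linarith
  rw [ge_iff_le]
  exact le_trans hKPsi (le_ciInf main)
end

section
/- Let T ≥ 1 be an integer, g > 0, and let (H, 𝒜) be a measurable space carrying two probability measures P₁, P₂ (the transcript laws of a bandit algorithm under the two environments). Let N₁ : H → ℕ be measurable with N₁(h) ≤ T for all h, set N₂(h) = T − N₁(h), and define the regret losses R₁(h) = g·N₂(h) (regret under environment 1) and R₂(h) = g·N₁(h) (regret under environment 2). Assume D_H²(P₁‖P₂) ≤ g²T/2. Then for every α ∈ [0,1): inf_{t ∈ ℝ} { t + (1/(1−α))·(½∫(R₁−t)₊ dP₁ + ½∫(R₂−t)₊ dP₂) } ≥ gT·Ψ_α(g√T). -/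
open MeasureTheory

private lemma psi_nonneg {α ρ : ℝ} (hα0 : 0 ≤ α) (hα1 : α < 1) (hρ : 0 ≤ ρ) :
    0 ≤ Psi α ρ := by
  unfold Psi
  split_ifs with h1 h2 h3
  · positivity
  · have hα : 0 < α := lt_of_le_of_ne hα0 (Ne.symm h1)
    have hρ2 : ρ ^ 2 ≤ α := by nlinarith
    have : ρ ^ 2 / (2 * α) ≤ 1 / 2 := by
      rw [div_le_div_iff₀ (by linarith) (by norm_num)]
      linarith
    linarith
  · have : (0:ℝ) < 2 * (1 - α) := by linarith
    positivity
  · exact le_refl 0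
private lemma psi_le_half {α ρ : ℝ} (hα0 : 0 ≤ α) (hα1 : α < 1) (hρ : 0 ≤ ρ) :
    Psi α ρ ≤ 1 / 2 := by
  unfold Psi
  split_ifs with h1 h2 h3
  · have hm0 : 0 ≤ max (1 - ρ) 0 := le_max_right _ _
    have hm1 : max (1 - ρ) 0 ≤ 1 := max_le (by linarith) (by norm_num)
    nlinarith
  · have hα : 0 < α := lt_of_le_of_ne hα0 (Ne.symm h1)
    have : 0 ≤ ρ ^ 2 / (2 * α) := by positivity
    linarith
  · push_neg at h2
    rw [div_le_iff₀ (by linarith : (0:ℝ) < 2 * (1 - α))]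
    nlinarith
  · norm_num

private lemma psi_key {α ρ : ℝ} (hα0 : 0 ≤ α) (hα1 : α < 1) (hρ : 0 ≤ ρ) :
    2 * (1 - α) * Psi α ρ ≤ max (1 - ρ) 0 := by
  unfold Psi
  split_ifs with h1 h2 h3
  · subst h1
    have hm0 : 0 ≤ max (1 - ρ) 0 := le_max_right _ _
    have hm1 : max (1 - ρ) 0 ≤ 1 := max_le (by linarith) (by norm_num)
    nlinarith
  · have hα : 0 < α := lt_of_le_of_ne hα0 (Ne.symm h1)
    rw [max_eq_left (by linarith : (0:ℝ) ≤ 1 - ρ)]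
    have key : 2 * (1 - α) * (1 / 2 - ρ ^ 2 / (2 * α)) = (1 - α) * (α - ρ ^ 2) / α := by
      field_simp
    rw [key, div_le_iff₀ hα]
    nlinarith [mul_nonneg hα.le (sub_nonneg.2 h2), mul_nonneg (sq_nonneg ρ) (by linarith : (0:ℝ) ≤ 1 - α)]
  · push_neg at h2
    rw [max_eq_left (by linarith : (0:ℝ) ≤ 1 - ρ)]
    have h1α : (1:ℝ) - α ≠ 0 := by intro h; linarith [sub_eq_zero.mp h]
    have key : 2 * (1 - α) * ((1 - ρ) ^ 2 / (2 * (1 - α))) = (1 - ρ) ^ 2 := by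
      field_simp
    rw [key]
    nlinarith
  · simp [le_max_right]

/-- pointwise CVaR bound -/
private lemma cvar_point {a b r₁ r₂ G t : ℝ} (ha : 0 ≤ a) (hb : 0 ≤ b) (hab : a + b = 1)
    (hr₁ : 0 ≤ r₁) (hr₂ : 0 ≤ r₂) (hr : r₁ + r₂ = G) :
    max (-t) 0 + (G - 2 * max t 0) * min a b ≤ max (r₁ - t) 0 * a + max (r₂ - t) 0 * b := by
  have h1 : r₁ - t ≤ max (r₁ - t) 0 := le_max_left _ _
  have h1' : (0:ℝ) ≤ max (r₁ - t) 0 := le_max_right _ _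
  have h2 : r₂ - t ≤ max (r₂ - t) 0 := le_max_left _ _
  have h2' : (0:ℝ) ≤ max (r₂ - t) 0 := le_max_right _ _
  have hm1 : min a b ≤ a := min_le_left _ _
  have hm2 : min a b ≤ b := min_le_right _ _
  have hm0 : (0:ℝ) ≤ min a b := le_min ha hb
  rcases le_total t 0 with ht | ht
  · rw [max_eq_right ht, max_eq_left (by linarith : (0:ℝ) ≤ -t)]
    nlinarith [mul_nonneg (sub_nonneg.2 h1) ha, mul_nonneg (sub_nonneg.2 h2) hb,
      mul_nonneg hr₁ (sub_nonneg.2 hm1), mul_nonneg hr₂ (sub_nonneg.2 hm2)]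
  · rw [max_eq_left ht, max_eq_right (by linarith : -t ≤ (0:ℝ))]
    nlinarith [mul_nonneg h1' (sub_nonneg.2 hm1), mul_nonneg h2' (sub_nonneg.2 hm2),
      mul_nonneg (sub_nonneg.2 h1) hm0, mul_nonneg (sub_nonneg.2 h2) hm0]

/-- pointwise Hellinger-affinity bound with parameter c -/
private lemma hell_point {a b c : ℝ} (ha : 0 ≤ a) (hb : 0 ≤ b) (hab : a + b = 1) (hc : 0 < c) :
    2 * c * (1 - 2 * min a b) ≤ c ^ 2 * (1 - 2 * Real.sqrt (a * b)) + (1 + 2 * Real.sqrt (a * b)) := by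
  set x := Real.sqrt a with hxdef
  set y := Real.sqrt b with hydef
  have hx : x ^ 2 = a := Real.sq_sqrt ha
  have hy : y ^ 2 = b := Real.sq_sqrt hb
  have hx0 : 0 ≤ x := Real.sqrt_nonneg _
  have hy0 : 0 ≤ y := Real.sqrt_nonneg _
  have hxy : Real.sqrt (a * b) = x * y := Real.sqrt_mul ha b
  rw [hxy]
  rcases le_total a b with h | h
  · rw [min_eq_left h]
    nlinarith [sq_nonneg (c * (y - x) - (x + y))]
  · rw [min_eq_right h]
    nlinarith [sq_nonneg (c * (x - y) - (x + y))]

/-- final scalar combination -/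
private lemma final_scalar {G B ρ α t Ψv E : ℝ} (hG : 0 < G) (hα0 : 0 ≤ α) (hα1 : α < 1)
    (hB0 : 0 ≤ B) (hBρ : max (1 - ρ) 0 ≤ B) (hΨ0 : 0 ≤ Ψv) (hΨ : Ψv ≤ 1 / 2)
    (hkey : 2 * (1 - α) * Ψv ≤ max (1 - ρ) 0) (hE0 : 0 ≤ E)
    (hE : (G - 2 * max t 0) * B / 2 + max (-t) 0 ≤ E) :
    G * Ψv ≤ t + (1 / (1 - α)) * E := by
  have h1α : (0:ℝ) < 1 - α := by linarith
  set M := G * Ψv with hM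
  have hM0 : 0 ≤ M := by positivity
  have hM2 : M ≤ G / 2 := by nlinarith
  have hMB : 2 * (1 - α) * M ≤ G * B := by
    have : 2 * (1 - α) * Ψv ≤ B := le_trans hkey hBρ
    nlinarith
  rcases le_total M t with h | h
  · have : 0 ≤ (1 / (1 - α)) * E := by positivity
    linarith
  · -- t ≤ M; reduce to (1-α)(M-t) ≤ bracket
    have hred : (1 - α) * (M - t) ≤ (G - 2 * max t 0) * B / 2 + max (-t) 0 := by
      rcases le_total t 0 with ht | ht
      · rw [max_eq_right ht, max_eq_left (by linarith : (0:ℝ) ≤ -t)]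
        nlinarith [mul_nonneg hα0 (neg_nonneg.2 ht)]
      · rw [max_eq_left ht, max_eq_right (by linarith : -t ≤ (0:ℝ))]
        rcases le_total B (1 - α) with hc | hc
        · nlinarith [mul_nonneg ht (sub_nonneg.2 hc)]
        · nlinarith [mul_nonneg (sub_nonneg.2 h) (sub_nonneg.2 hc),
            mul_nonneg hB0 (by linarith : (0:ℝ) ≤ G / 2 - M)]
    have := le_trans hred hE
    calc G * Ψv = t + (1 / (1 - α)) * ((1 - α) * (M - t)) := by field_simp; linarith
    _ ≤ t + (1 / (1 - α)) * E := by
        have h' : (0:ℝ) ≤ 1 / (1 - α) := by positivity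
        have := mul_le_mul_of_nonneg_left this h'
        linarith

set_option maxHeartbeats 1000000 in
theorem two_armed_gaussian_bandit_cvar
    (T : ℕ) (hT : 1 ≤ T) (g : ℝ) (hg : 0 < g)
    {H : Type*} [MeasurableSpace H]
    (P₁ P₂ : Measure H) [IsProbabilityMeasure P₁] [IsProbabilityMeasure P₂]
    (N₁ : H → ℕ) (hN₁ : Measurable N₁) (hN₁T : ∀ h, N₁ h ≤ T)
    (hHell : sqHellinger P₁ P₂ ≤ g ^ 2 * T / 2)
    (α : ℝ) (hα : α ∈ Set.Ico (0 : ℝ) 1) :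
    (⨅ t : ℝ, t + (1 / (1 - α)) *
        ((1 / 2) * (∫ h, max (g * ((T : ℝ) - (N₁ h : ℝ)) - t) 0 ∂P₁)
          + (1 / 2) * (∫ h, max (g * (N₁ h : ℝ) - t) 0 ∂P₂))) ≥
    g * T * Psi α (g * Real.sqrt T) := by
  obtain ⟨hα0, hα1⟩ := hα
  have h1α : (0:ℝ) < 1 - α := by linarith
  have hT0 : (0:ℝ) < T := by exact_mod_cast Nat.pos_of_ne_zero (by omega)
  set ρ : ℝ := g * Real.sqrt T with hρdef
  have hρ : 0 < ρ := mul_pos hg (Real.sqrt_pos.2 hT0)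
  have hρ2 : ρ ^ 2 = g ^ 2 * T := by
    rw [hρdef, mul_pow, Real.sq_sqrt hT0.le]
  set G : ℝ := g * T with hGdef
  have hG : 0 < G := mul_pos hg hT0
  set ν : Measure H := P₁ + P₂ with hνdef
  have hac1 : P₁ ≪ ν := Measure.absolutelyContinuous_of_le (Measure.le_add_right le_rfl)
  have hac2 : P₂ ≪ ν := Measure.absolutelyContinuous_of_le (Measure.le_add_left le_rfl)
  set p : H → ℝ := fun x => (P₁.rnDeriv ν x).toReal with hpdef
  set q : H → ℝ := fun x => (P₂.rnDeriv ν x).toReal with hqdef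
  have hpm : Measurable p := (Measure.measurable_rnDeriv _ _).ennreal_toReal
  have hqm : Measurable q := (Measure.measurable_rnDeriv _ _).ennreal_toReal
  have hp0 : ∀ x, 0 ≤ p x := fun x => ENNReal.toReal_nonneg
  have hq0 : ∀ x, 0 ≤ q x := fun x => ENNReal.toReal_nonneg
  -- p + q = 1 a.e.
  have hsum : ∀ᵐ x ∂ν, p x + q x = 1 := by
    have h2 := Measure.rnDeriv_add' P₁ P₂ ν
    have h3 := Measure.rnDeriv_self ν
    rw [← hνdef] at h2
    filter_upwards [h2, h3, Measure.rnDeriv_lt_top P₁ ν, Measure.rnDeriv_lt_top P₂ ν]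
      with x hx hx1 hfin1 hfin2
    have : P₁.rnDeriv ν x + P₂.rnDeriv ν x = 1 := by
      rw [← Pi.add_apply, ← hx, hx1]
    have h4 := congrArg ENNReal.toReal this
    rwa [ENNReal.toReal_add hfin1.ne hfin2.ne, ENNReal.toReal_one] at h4
  have hν2 : (ν Set.univ).toReal = 2 := by
    rw [hνdef, Measure.add_apply, measure_univ, measure_univ, one_add_one_eq_two,
      ENNReal.toReal_ofNat]
  -- linear integral helper
  have hlin : ∀ (k₁ k₂ : ℝ) (f : H → ℝ), Integrable f ν →
      ∫ x, (k₁ + k₂ * f x) ∂ν = 2 * k₁ + k₂ * ∫ x, f x ∂ν := by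
    intro k₁ k₂ f hf
    rw [integral_add (integrable_const _) (hf.const_mul _), integral_const, integral_const_mul,
      smul_eq_mul, measureReal_def, hν2]
  -- the minimum of densities and its integral
  set m : H → ℝ := fun x => min (p x) (q x) with hmdef
  have hmm : Measurable m := hpm.min hqm
  have hm_int : Integrable m ν := by
    refine (integrable_const (1:ℝ)).mono' hmm.aestronglyMeasurable ?_
    filter_upwards [hsum] with x hx
    rw [Real.norm_eq_abs, abs_of_nonneg (le_min (hp0 x) (hq0 x))]
    calc min (p x) (q x) ≤ p x := min_le_left _ _
    _ ≤ 1 := by have := hq0 x; linarith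
  set B : ℝ := ∫ x, m x ∂ν with hBdef
  have hB0 : 0 ≤ B := integral_nonneg fun x => le_min (hp0 x) (hq0 x)
  -- Hellinger affinity
  set s : H → ℝ := fun x => Real.sqrt (p x * q x) with hsdef
  have hsm : Measurable s := (hpm.mul hqm).sqrt
  have hs_half : ∀ᵐ x ∂ν, s x ≤ 1 / 2 := by
    filter_upwards [hsum] with x hx
    have : p x * q x ≤ (1/2)^2 := by nlinarith [hp0 x, hq0 x, sq_nonneg (p x - q x)]
    calc s x ≤ Real.sqrt ((1/2)^2) := Real.sqrt_le_sqrt this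
    _ = 1/2 := Real.sqrt_sq (by norm_num)
  have hs_int : Integrable s ν := by
    refine (integrable_const (1:ℝ)).mono' hsm.aestronglyMeasurable ?_
    filter_upwards [hs_half] with x hx
    rw [Real.norm_eq_abs, abs_of_nonneg (Real.sqrt_nonneg _)]
    linarith
  have hD : sqHellinger P₁ P₂ = 1 - ∫ x, s x ∂ν := rfl
  set S : ℝ := ∫ x, s x ∂ν with hSdef
  have hD0 : S ≤ 1 := by
    have : ∫ x, s x ∂ν ≤ ∫ _x, (1:ℝ)/2 ∂ν := by
      refine integral_mono_ae hs_int (integrable_const _) hs_half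
    rw [integral_const, smul_eq_mul, measureReal_def, hν2] at this
    linarith
  have hDH : 1 - S ≤ ρ ^ 2 / 2 := by
    rw [hD] at hHell; rw [hρ2]; exact hHell
  -- affinity lower bound : B ≥ 1 - ρ
  have hBρ : max (1 - ρ) 0 ≤ B := by
    set c : ℝ := 2 / ρ with hcdef
    have hc : 0 < c := by positivity
    have hcρ : c * ρ = 2 := by rw [hcdef]; field_simp
    have hmono : ∫ x, (2 * c + (-(4*c)) * m x) ∂ν ≤ ∫ x, ((c^2 + 1) + (2 - 2*c^2) * s x) ∂ν := by
      refine integral_mono_ae ((integrable_const _).add (hm_int.const_mul _))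
        ((integrable_const _).add (hs_int.const_mul _)) ?_
      filter_upwards [hsum] with x hx
      have h' : 2 * c * (1 - 2 * m x) ≤ c ^ 2 * (1 - 2 * s x) + (1 + 2 * s x) :=
        hell_point (hp0 x) (hq0 x) hx hc
      linarith
    rw [hlin _ _ _ hm_int, hlin _ _ _ hs_int, ← hBdef, ← hSdef] at hmono
    -- hmono : 2*(2*c) + (-(4*c))*B ≤ 2*(c^2+1) + (2-2*c^2)*S
    have hBineq : 1 - ρ ≤ B := by
      nlinarith [mul_pos hρ hρ, mul_pos hc hρ, mul_nonneg (sq_nonneg c) (by linarith : 0 ≤ 1 - S)]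
    exact max_le hBineq hB0
  -- now the CVaR bound for each t
  rw [ge_iff_le]
  refine le_ciInf fun t => ?_
  set F₁ : H → ℝ := fun h => max (g * ((T : ℝ) - (N₁ h : ℝ)) - t) 0 with hF₁def
  set F₂ : H → ℝ := fun h => max (g * (N₁ h : ℝ) - t) 0 with hF₂def
  have hNR : Measurable fun h => (N₁ h : ℝ) := measurable_from_top.comp hN₁
  have hF₁m : Measurable F₁ :=
    (((measurable_const.sub hNR).const_mul g).sub measurable_const).max measurable_const
  have hF₂m : Measurable F₂ :=
    ((hNR.const_mul g).sub measurable_const).max measurable_const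
  have hF₁bd : ∀ h, F₁ h ≤ G + |t| := by
    intro h
    have h1 : (N₁ h : ℝ) ≤ T := by exact_mod_cast hN₁T h
    have h2 : (0:ℝ) ≤ (N₁ h : ℝ) := Nat.cast_nonneg _
    refine max_le ?_ (by positivity)
    have : -t ≤ |t| := neg_le_abs t
    nlinarith
  have hF₂bd : ∀ h, F₂ h ≤ G + |t| := by
    intro h
    have h1 : (N₁ h : ℝ) ≤ T := by exact_mod_cast hN₁T h
    have h2 : (0:ℝ) ≤ (N₁ h : ℝ) := Nat.cast_nonneg _
    refine max_le ?_ (by positivity)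
    have : -t ≤ |t| := neg_le_abs t
    nlinarith
  have hF₁0 : ∀ h, 0 ≤ F₁ h := fun h => le_max_right _ _
  have hF₂0 : ∀ h, 0 ≤ F₂ h := fun h => le_max_right _ _
  -- rewrite integrals over ν
  have hI1 : ∫ h, F₁ h ∂P₁ = ∫ x, p x * F₁ x ∂ν := by
    rw [← integral_rnDeriv_smul hac1]
    simp only [smul_eq_mul, hpdef]
  have hI2 : ∫ h, F₂ h ∂P₂ = ∫ x, q x * F₂ x ∂ν := by
    rw [← integral_rnDeriv_smul hac2]
    simp only [smul_eq_mul, hqdef]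
  have hpF_int : Integrable (fun x => p x * F₁ x) ν := by
    refine (integrable_const (G + |t|)).mono' (hpm.mul hF₁m).aestronglyMeasurable ?_
    filter_upwards [hsum] with x hx
    rw [Real.norm_eq_abs, abs_of_nonneg (mul_nonneg (hp0 x) (hF₁0 x))]
    have hp1 : p x ≤ 1 := by have := hq0 x; linarith
    calc p x * F₁ x ≤ 1 * (G + |t|) :=
          mul_le_mul hp1 (hF₁bd x) (hF₁0 x) one_pos.le
    _ = G + |t| := one_mul _
  have hqF_int : Integrable (fun x => q x * F₂ x) ν := by
    refine (integrable_const (G + |t|)).mono' (hqm.mul hF₂m).aestronglyMeasurable ?_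
    filter_upwards [hsum] with x hx
    rw [Real.norm_eq_abs, abs_of_nonneg (mul_nonneg (hq0 x) (hF₂0 x))]
    have hq1 : q x ≤ 1 := by have := hp0 x; linarith
    calc q x * F₂ x ≤ 1 * (G + |t|) :=
          mul_le_mul hq1 (hF₂bd x) (hF₂0 x) one_pos.le
    _ = G + |t| := one_mul _
  -- pointwise lower bound and integration
  have hptwise : ∀ᵐ x ∂ν, max (-t) 0 + (G - 2 * max t 0) * m x ≤ p x * F₁ x + q x * F₂ x := by
    filter_upwards [hsum] with x hx
    have hr₁ : (0:ℝ) ≤ g * ((T : ℝ) - (N₁ x : ℝ)) := by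
      have h1 : (N₁ x : ℝ) ≤ T := by exact_mod_cast hN₁T x
      have : (0:ℝ) ≤ (T : ℝ) - (N₁ x : ℝ) := by linarith
      positivity
    have hr₂ : (0:ℝ) ≤ g * (N₁ x : ℝ) := by positivity
    have hrsum : g * ((T : ℝ) - (N₁ x : ℝ)) + g * (N₁ x : ℝ) = G := by rw [hGdef]; ring
    have h' : max (-t) 0 + (G - 2 * max t 0) * m x ≤ F₁ x * p x + F₂ x * q x :=
      cvar_point (hp0 x) (hq0 x) hx hr₁ hr₂ hrsum (t := t)
    linarith
  have hEbound : (G - 2 * max t 0) * B / 2 + max (-t) 0 ≤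
      (1 / 2) * (∫ h, F₁ h ∂P₁) + (1 / 2) * (∫ h, F₂ h ∂P₂) := by
    have hmono := integral_mono_ae ((integrable_const _).add (hm_int.const_mul _))
      (hpF_int.add hqF_int) hptwise
    have e1 := hlin (max (-t) 0) (G - 2 * max t 0) m hm_int
    have e2 := integral_add hpF_int hqF_int
    rw [hI1, hI2]
    rw [← hBdef] at e1
    simp only [Pi.add_apply] at hmono
    linarith [hmono, e1, e2]
  have hE0 : 0 ≤ (1 / 2) * (∫ h, F₁ h ∂P₁) + (1 / 2) * (∫ h, F₂ h ∂P₂) := by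
    have h1 : 0 ≤ ∫ h, F₁ h ∂P₁ := integral_nonneg hF₁0
    have h2 : 0 ≤ ∫ h, F₂ h ∂P₂ := integral_nonneg hF₂0
    linarith
  have := final_scalar (G := G) (B := B) (ρ := ρ) (α := α) (t := t)
    (Ψv := Psi α ρ) hG hα0 hα1 hB0 hBρ (psi_nonneg hα0 hα1 hρ.le)
    (psi_le_half hα0 hα1 hρ.le) (psi_key hα0 hα1 hρ.le) hE0 hEbound
  exact this
end

section
/- Let α ∈ [0,1) and ρ ≥ 0, and define F_{α,ρ}(x) = 1/2 − x + ((√x − ρ/√2)₊)²/(1−α) for x ∈ [0, 1/2]. Then inf_{x ∈ [0,1/2]} F_{α,ρ}(x) = Ψ_α(ρ), where Ψ_α is defined by: if α > 0, Ψ_α(ρ) = 1/2 − ρ²/(2α) for 0 ≤ ρ ≤ α, Ψ_α(ρ) = (1−ρ)²/(2(1−α)) for α < ρ ≤ 1, and Ψ_α(ρ) = 0 for ρ ≥ 1; and Ψ_0(ρ) = ((1−ρ)₊)²/2. -/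
set_option maxHeartbeats 1000000 in
theorem scalar_minimization
    (α : ℝ) (hα : α ∈ Set.Ico (0 : ℝ) 1) (ρ : ℝ) (hρ : 0 ≤ ρ) :
    sInf ((fun x : ℝ =>
        1 / 2 - x + (max (Real.sqrt x - ρ / Real.sqrt 2) 0) ^ 2 / (1 - α)) ''
      Set.Icc (0 : ℝ) (1 / 2)) = Psi α ρ := by
  obtain ⟨hα0, hα1⟩ := hα
  have h1α : (0:ℝ) < 1 - α := by linarith
  set c := Real.sqrt 2 with hcdef
  have hc0 : 0 < c := Real.sqrt_pos.mpr (by norm_num)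
  have hc2 : c ^ 2 = 2 := Real.sq_sqrt (by norm_num)
  set r := ρ / c with hrdef
  have hr0 : 0 ≤ r := div_nonneg hρ hc0.le
  have hrc : r * c = ρ := div_mul_cancel₀ ρ hc0.ne'
  have hr2 : r ^ 2 * 2 = ρ ^ 2 := by rw [← hc2, ← hrc]; ring
  apply IsLeast.csInf_eq
  constructor
  · -- the infimum is attained
    by_cases hA : 0 < α ∧ ρ ≤ α
    · obtain ⟨hαpos, hρα⟩ := hA
      refine ⟨(r / α) ^ 2, ⟨sq_nonneg _, ?_⟩, ?_⟩
      · rw [div_pow, div_le_iff₀ (by positivity)]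
        nlinarith [hr2, mul_le_mul hρα hρα hρ hα0]
      · have hsq : Real.sqrt ((r / α) ^ 2) = r / α :=
          Real.sqrt_sq (div_nonneg hr0 hαpos.le)
        have hge : r ≤ r / α := by
          rw [le_div_iff₀ hαpos]
          nlinarith [mul_le_of_le_one_right hr0 hα1.le]
        simp only [hsq]
        rw [max_eq_left (by linarith)]
        rw [Psi, if_neg hαpos.ne', if_pos hρα, ← hr2]
        field_simp
        ring
    · have hρα : α ≤ ρ := by
        rcases eq_or_lt_of_le hα0 with h | h
        · rw [← h]; exact hρ
        · push_neg at hA; exact (hA h).le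
      have hsqrt : Real.sqrt ((1:ℝ)/2) = 1 / c := by
        rw [show (1/2:ℝ) = (1/c)^2 by rw [div_pow, one_pow, hc2],
          Real.sqrt_sq (by positivity)]
      refine ⟨1/2, ⟨by norm_num, le_refl _⟩, ?_⟩
      simp only [hsqrt]
      rcases le_or_gt ρ 1 with hρ1 | hρ1
      · have hle : r ≤ 1 / c := by
          rw [hrdef]; gcongr
        rw [max_eq_left (by linarith),
          show 1/c - r = (1-ρ)/c from by rw [hrdef]; ring, div_pow, hc2]
        by_cases h0 : α = 0
        · subst h0
          simp [Psi, max_eq_left (by linarith : (0:ℝ) ≤ 1 - ρ)]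
        · rw [Psi, if_neg h0]
          split_ifs with h1
          · have : ρ = α := le_antisymm h1 hρα
            subst this
            field_simp
            ring
          · field_simp
            ring
      · rw [max_eq_right (by
          have : 1/c ≤ r := by rw [hrdef]; gcongr
          linarith)]
        rw [Psi]
        split_ifs with h0 h1 h2
        · rw [max_eq_right (by linarith)]; norm_num
        · linarith
        · linarith
        · norm_num
  · -- lower bound
    rintro y ⟨x, ⟨hx0, hx12⟩, rfl⟩
    simp only
    set s := Real.sqrt x with hsdef
    have hs0 : 0 ≤ s := Real.sqrt_nonneg x
    have hs2 : s ^ 2 = x := Real.sq_sqrt hx0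
    set u := s * c with hudef
    have hu0 : 0 ≤ u := mul_nonneg hs0 hc0.le
    have hu2 : u ^ 2 = 2 * s ^ 2 := by rw [hudef, mul_pow, hc2]; ring
    have hu1 : u ≤ 1 := by nlinarith [hu2, hs2, hx12]
    have hxs : x = u ^ 2 / 2 := by rw [hu2, hs2]; ring
    have husr : (s - r) ^ 2 = (u - ρ) ^ 2 / 2 := by
      rw [← hrc, hudef, ← hc2]; field_simp
    clear_value c r s u
    rw [hxs]
    have hdiv : (u - ρ) ^ 2 / 2 / (1 - α) = (u - ρ) ^ 2 / (2 * (1 - α)) := by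
      rw [div_div]
    rcases le_or_gt s r with hm | hm
    · -- max = 0
      have huρ : u ≤ ρ := by
        rw [hudef, ← hrc]
        exact mul_le_mul_of_nonneg_right hm hc0.le
      rw [max_eq_right (by linarith)]
      norm_num
      rw [Psi]
      split_ifs with h0 h1 h2
      · subst h0
        rcases le_or_gt ρ 1 with hρ1 | hρ1
        · rw [max_eq_left (by linarith)]
          nlinarith [mul_le_mul huρ huρ hu0 hρ]
        · rw [max_eq_right (by linarith)]
          nlinarith
      · have hαpos : 0 < α := lt_of_le_of_ne hα0 (Ne.symm h0)
        have hd : ρ ^ 2 / 2 ≤ ρ ^ 2 / (2 * α) :=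
          div_le_div_of_nonneg_left (sq_nonneg ρ) (by positivity) (by linarith)
        nlinarith [mul_le_mul huρ huρ hu0 hρ]
      · have hαρ : α < ρ := lt_of_not_ge h1
        rw [div_le_iff₀ (by linarith : (0:ℝ) < 2 * (1 - α))]
        nlinarith [mul_le_mul huρ huρ hu0 hρ,
          mul_nonneg (by linarith : (0:ℝ) ≤ 1 - ρ)
            (by nlinarith [mul_le_of_le_one_left hρ hα1.le] : (0:ℝ) ≤ 2*ρ - α - α*ρ)]
      · nlinarith
    · -- max = s - r
      rw [max_eq_left (by linarith), husr, hdiv]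
      rw [Psi]
      split_ifs with h0 h1 h2
      · subst h0
        norm_num
        rcases le_or_gt ρ 1 with hρ1 | hρ1
        · rw [max_eq_left (by linarith)]
          nlinarith [mul_le_of_le_one_left hρ hu1]
        · rw [max_eq_right (by linarith)]
          nlinarith
      · have hαpos : 0 < α := lt_of_le_of_ne hα0 (Ne.symm h0)
        have key : (1/2 - u^2/2 + (u - ρ)^2/(2*(1-α))) - (1/2 - ρ^2/(2*α))
            = (α*u - ρ)^2 / (2*α*(1-α)) := by
          field_simp
          ring
        have hnn : 0 ≤ (α*u - ρ)^2 / (2*α*(1-α)) :=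
          div_nonneg (sq_nonneg _) (by positivity)
        linarith
      · have hαρ : α < ρ := lt_of_not_ge h1
        have key : (1/2 - u^2/2 + (u - ρ)^2/(2*(1-α))) - (1-ρ)^2/(2*(1-α))
            = (1 - u)*(2*ρ - α*(1+u)) / (2*(1-α)) := by
          field_simp
          ring
        have hnn : 0 ≤ (1 - u)*(2*ρ - α*(1+u)) / (2*(1-α)) := by
          apply div_nonneg _ (by linarith)
          apply mul_nonneg (by linarith)
          nlinarith
        linarith
      · have hnn : 0 ≤ (u - ρ)^2/(2*(1-α)) :=
          div_nonneg (sq_nonneg _) (by linarith)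
        nlinarith
end

section
/- Let α ∈ [0,1). Then sup_{ρ ≥ 0} ρ·Ψ_α(ρ) = c_α, where c_α = 2/(27(1−α)) if 0 ≤ α ≤ 1/3 and c_α = √α/(3√3) if 1/3 ≤ α < 1. -/
/-- The optimized constant `c_α`. -/
noncomputable def cAlpha (α : ℝ) : ℝ :=
  if α ≤ 1 / 3 then 2 / (27 * (1 - α)) else Real.sqrt α / (3 * Real.sqrt 3)

lemma psi_ub (α : ℝ) (h0 : 0 ≤ α) (h1 : α < 1) (ρ : ℝ) (hρ : 0 ≤ ρ) :
    ρ * Psi α ρ ≤ cAlpha α := by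
  have h1' : 0 < 1 - α := by linarith
  unfold Psi cAlpha
  by_cases hα0 : α = 0
  · subst hα0
    rw [if_pos rfl, if_pos (by norm_num)]
    by_cases hρ1 : ρ ≤ 1
    · rw [max_eq_left (by linarith)]
      nlinarith [mul_nonneg (sq_nonneg (1 - 3*ρ)) (by linarith : (0:ℝ) ≤ 4 - 3*ρ)]
    · rw [max_eq_right (by linarith)]
      norm_num
  · rw [if_neg hα0]
    have hαpos : 0 < α := lt_of_le_of_ne h0 (Ne.symm hα0)
    by_cases h13 : α ≤ 1/3
    · rw [if_pos h13]
      by_cases hρα : ρ ≤ α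
      · rw [if_pos hρα]
        -- f increasing on [0,α], f(α) = α(1-α)/2 ≤ 2/(27(1-α))
        rw [show ρ * (1 / 2 - ρ ^ 2 / (2 * α)) = (ρ * α - ρ^3) / (2 * α) by
              field_simp,
            div_le_div_iff₀ (by positivity) (by positivity)]
        have hmono : 0 ≤ (α - ρ) * (α - α^2 - α*ρ - ρ^2) :=
          mul_nonneg (sub_nonneg.2 hρα) (by nlinarith)
        have hcube : 0 ≤ (1 - 3*α)^2 * (4 - 3*α) :=
          mul_nonneg (sq_nonneg _) (by linarith)
        nlinarith [mul_nonneg (by linarith : (0:ℝ) ≤ 27 * (1 - α)) hmono,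
          mul_nonneg hαpos.le hcube]
      · rw [if_neg hρα]
        by_cases hρ1 : ρ ≤ 1
        · rw [if_pos hρ1]
          rw [show ρ * ((1 - ρ) ^ 2 / (2 * (1 - α))) = ρ * (1 - ρ)^2 / (2 * (1 - α)) by ring,
            div_le_div_iff₀ (by positivity) (by positivity)]
          nlinarith [mul_nonneg (mul_nonneg (sq_nonneg (1 - 3*ρ))
            (by linarith : (0:ℝ) ≤ 4 - 3*ρ)) h1'.le]
        · rw [if_neg hρ1, mul_zero]
          positivity
    · rw [if_neg h13]
      push_neg at h13
      set s := Real.sqrt (α/3) with hs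
      have hs2 : s^2 = α/3 := Real.sq_sqrt (by positivity)
      have hspos : 0 < s := Real.sqrt_pos.2 (by positivity)
      have hgoal : Real.sqrt α / (3 * Real.sqrt 3) = s / 3 := by
        rw [hs, Real.sqrt_div h0 3]; ring
      rw [hgoal]
      have hα3 : α = 3 * s^2 := by rw [hs2]; ring
      by_cases hρα : ρ ≤ α
      · rw [if_pos hρα]
        rw [show ρ * (1 / 2 - ρ ^ 2 / (2 * α)) = (ρ * α - ρ^3) / (2 * α) by
              field_simp,
            div_le_div_iff₀ (by positivity) (by positivity)]
        nlinarith [mul_nonneg (sq_nonneg (ρ - s)) (by positivity : (0:ℝ) ≤ ρ + 2*s)]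
      · rw [if_neg hρα]
        push_neg at hρα
        have h13ρ : 1/3 < ρ := lt_trans h13 hρα
        by_cases hρ1 : ρ ≤ 1
        · rw [if_pos hρ1]
          rw [show ρ * ((1 - ρ) ^ 2 / (2 * (1 - α))) = ρ * (1 - ρ)^2 / (2 * (1 - α)) by ring,
            div_le_div_iff₀ (by positivity) (by positivity)]
          -- monotone decrease from ρ down to α, then the cubic bound at α
          have hE : 0 ≤ 2*α + 2*ρ - 1 - α^2 - α*ρ - ρ^2 := by
            nlinarith [mul_nonneg (by linarith : (0:ℝ) ≤ 3*α - 1) h1'.le,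
              mul_nonneg (by linarith : (0:ℝ) ≤ 3*ρ - 1) (by linarith : (0:ℝ) ≤ 1 - ρ),
              sq_nonneg (ρ - α)]
          have hprod : 0 ≤ (ρ - α) * (2*α + 2*ρ - 1 - α^2 - α*ρ - ρ^2) :=
            mul_nonneg (by linarith) hE
          have hkey : 3*α*(1-α)^2 ≤ 2*s*(1-α) := by
            rw [hα3]
            nlinarith [mul_nonneg (mul_nonneg h1'.le hspos.le)
              (mul_nonneg (sq_nonneg (3*s - 1)) (by positivity : (0:ℝ) ≤ 3*s + 2))]
          nlinarith [hprod, hkey]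
        · rw [if_neg hρ1, mul_zero]
          positivity

lemma psi_attained (α : ℝ) (h0 : 0 ≤ α) (h1 : α < 1) :
    ∃ ρ : ℝ, 0 ≤ ρ ∧ cAlpha α = ρ * Psi α ρ := by
  have h1' : (1:ℝ) - α ≠ 0 := by intro h; linarith
  by_cases h13 : α ≤ 1/3
  · refine ⟨1/3, by norm_num, ?_⟩
    unfold Psi cAlpha
    rw [if_pos h13]
    by_cases hα0 : α = 0
    · subst hα0
      rw [if_pos rfl]
      norm_num
    · rw [if_neg hα0]
      have hαpos : 0 < α := lt_of_le_of_ne h0 (Ne.symm hα0)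
      by_cases h' : (1:ℝ)/3 ≤ α
      · have : α = 1/3 := le_antisymm h13 h'
        subst this
        rw [if_pos h']
        norm_num
      · rw [if_neg h', if_pos (by norm_num)]
        field_simp
        ring
  · push_neg at h13
    have hαpos : 0 < α := by linarith
    set s := Real.sqrt (α/3) with hs
    have hs2 : s^2 = α/3 := Real.sq_sqrt (by positivity)
    have hspos : 0 < s := Real.sqrt_pos.2 (by positivity)
    have hsα : s ≤ α := by
      have : Real.sqrt (α/3) ≤ Real.sqrt (α^2) :=
        Real.sqrt_le_sqrt (by nlinarith)
      rwa [Real.sqrt_sq h0] at this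
    refine ⟨s, hspos.le, ?_⟩
    unfold Psi cAlpha
    rw [if_neg (by linarith), if_neg hαpos.ne', if_pos hsα]
    have hgoal : Real.sqrt α / (3 * Real.sqrt 3) = s / 3 := by
      rw [hs, Real.sqrt_div h0 3]; ring
    rw [hgoal, hs2]
    field_simp
    ring

theorem sup_rho_psi (α : ℝ) (hα : α ∈ Set.Ico (0 : ℝ) 1) :
    sSup {y : ℝ | ∃ ρ : ℝ, 0 ≤ ρ ∧ y = ρ * Psi α ρ} = cAlpha α := by
  obtain ⟨h0, h1⟩ := hα
  have hub : ∀ y ∈ {y : ℝ | ∃ ρ : ℝ, 0 ≤ ρ ∧ y = ρ * Psi α ρ}, y ≤ cAlpha α := by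
    rintro y ⟨ρ, hρ, rfl⟩
    exact psi_ub α h0 h1 ρ hρ
  have hmem : cAlpha α ∈ {y : ℝ | ∃ ρ : ℝ, 0 ≤ ρ ∧ y = ρ * Psi α ρ} :=
    psi_attained α h0 h1
  refine le_antisymm (csSup_le ⟨0, 0, le_refl 0, (zero_mul _).symm⟩ hub)
    (le_csSup ⟨cAlpha α, hub⟩ hmem)
end
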